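/- arXiv:cs/0611007 — 3 statements merged into one kernel-verified Lean document; each statement's English description precedes it below -/
import Mathlib

section
/- For integers i, t, s with 1 ≤ i ≤ s ≤ t, λ > 0, and x ≥ 0, the integral ∫_x^∞ y^{t-i} e^{-y} ₀F₁(t-s+1; λy) dy equals (t-s)! λ^{(s-t)/2} e^{λ} 2^{(2i-s-t)/2} Q_{s+t-2i+1, t-s}(√(2λ), √(2x)), where Q_{p,q}(a,b) = ∫_b^∞ x^p exp(-(x²+a²)/2) I_q(ax) dx is the Nuttall Q-function. -/
open MeasureTheory Real

/-- Modified Bessel function of the first kind of nonnegative integer order `q`. -/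
noncomputable def besselI (q : ℕ) (z : ℝ) : ℝ :=
  ∑' m : ℕ, (z / 2) ^ (q + 2 * m) / ((Nat.factorial m : ℝ) * (Nat.factorial (q + m) : ℝ))

/-- Scalar hypergeometric function `₀F₁(b; x) = ∑_{p=0}^∞ x^p / ((b)_p p!)`. -/
noncomputable def hyp0F1 (b : ℝ) (x : ℝ) : ℝ :=
  ∑' p : ℕ, x ^ p / ((ascPochhammer ℝ p).eval b * (Nat.factorial p : ℝ))

/-- Nuttall Q-function `Q_{p,q}(a,b) = ∫_b^∞ x^p exp(-(x²+a²)/2) I_q(ax) dx`. -/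
noncomputable def nuttallQ (p q : ℕ) (a b : ℝ) : ℝ :=
  ∫ x in Set.Ioi b, x ^ p * Real.exp (-(x ^ 2 + a ^ 2) / 2) * besselI q (a * x)

lemma besselI_two_sqrt (q : ℕ) (w : ℝ) (hw : 0 ≤ w) :
    besselI q (2 * Real.sqrt w) =
      Real.sqrt w ^ q * hyp0F1 ((q : ℝ) + 1) w / (Nat.factorial q : ℝ) := by
  have hq0 : (Nat.factorial q : ℝ) ≠ 0 := Nat.cast_ne_zero.2 q.factorial_ne_zero
  rw [eq_div_iff hq0, mul_comm _ (Nat.factorial q : ℝ)]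
  unfold besselI hyp0F1
  rw [← tsum_mul_left, ← tsum_mul_left]
  refine tsum_congr fun m => ?_
  have h1 : (2 * Real.sqrt w) / 2 = Real.sqrt w := by ring
  have h2 : Real.sqrt w ^ (q + 2*m) = Real.sqrt w ^ q * w ^ m := by
    rw [pow_add, pow_mul, Real.sq_sqrt hw]
  have h3 : (ascPochhammer ℝ m).eval ((q:ℝ)+1) = ((q+1).ascFactorial m : ℕ) := by
    rw [show ((q:ℝ)+1) = ((q+1 : ℕ):ℝ) by push_cast; ring, ← ascPochhammer_eval_cast,
      ascPochhammer_nat_eq_ascFactorial]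
  have h4 : (q.factorial : ℝ) * ((q+1).ascFactorial m : ℕ) = ((q+m).factorial : ℕ) := by
    exact_mod_cast congrArg (Nat.cast (R := ℝ)) (Nat.factorial_mul_ascFactorial q m)
  have h5 : ((q+1).ascFactorial m : ℝ) ≠ 0 := by
    rw [← h4] at *; positivity
  rw [h1, h2, h3]
  field_simp
  rw [← h4]
  ring

/-- For integers `1 ≤ i ≤ s ≤ t`, `λ > 0` and `x ≥ 0`,
`∫_x^∞ y^{t-i} e^{-y} ₀F₁(t-s+1; λy) dy
  = (t-s)! λ^{(s-t)/2} e^{λ} 2^{(2i-s-t)/2} Q_{s+t-2i+1, t-s}(√(2λ), √(2x))`. -/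
theorem integral_hyp0F1_eq_nuttallQ (i s t : ℕ) (hi : 1 ≤ i) (his : i ≤ s) (hst : s ≤ t)
    (lam : ℝ) (hlam : 0 < lam) (x : ℝ) (hx : 0 ≤ x) :
    ∫ y in Set.Ioi x, y ^ (t - i) * Real.exp (-y) * hyp0F1 (((t - s : ℕ) : ℝ) + 1) (lam * y) =
      (Nat.factorial (t - s) : ℝ) * lam ^ (((s : ℝ) - t) / 2) * Real.exp lam *
        (2 : ℝ) ^ ((2 * (i : ℝ) - s - t) / 2) *
          nuttallQ (s + t - 2 * i + 1) (t - s) (Real.sqrt (2 * lam)) (Real.sqrt (2 * x)) := by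
  have h2i : 2 * i ≤ s + t := by omega
  -- image of Ioi x under y ↦ √(2y)
  have himg : (fun y => Real.sqrt (2*y)) '' Set.Ioi x = Set.Ioi (Real.sqrt (2*x)) := by
    ext u
    simp only [Set.mem_image, Set.mem_Ioi]
    constructor
    · rintro ⟨y, hy, rfl⟩
      exact Real.sqrt_lt_sqrt (by linarith) (by linarith)
    · intro hu
      have hu0 : 0 ≤ u := le_trans (Real.sqrt_nonneg _) hu.le
      have h2x : 2*x < u^2 := Real.lt_sq_of_sqrt_lt hu
      exact ⟨u^2/2, by linarith, by
        rw [show 2*(u^2/2) = u^2 by ring, Real.sqrt_sq hu0]⟩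
  have hderiv : ∀ y ∈ Set.Ioi x, HasDerivWithinAt (fun y => Real.sqrt (2*y))
      ((Real.sqrt (2*y))⁻¹) (Set.Ioi x) y := by
    intro y hy
    have hy0 : 0 < y := lt_of_le_of_lt hx hy
    have h1 : HasDerivAt (fun y : ℝ => 2*y) 2 y := by
      simpa using (hasDerivAt_id y).const_mul 2
    have h2 := (Real.hasDerivAt_sqrt (by positivity : (2:ℝ)*y ≠ 0)).comp y h1
    have h3 : 1 / (2 * Real.sqrt (2*y)) * 2 = (Real.sqrt (2*y))⁻¹ := by
      have : Real.sqrt (2*y) ≠ 0 := by positivity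
      field_simp
    exact (h3 ▸ h2).hasDerivWithinAt
  have hinj : Set.InjOn (fun y => Real.sqrt (2*y)) (Set.Ioi x) := by
    intro a ha b hb hab
    have ha0 : 0 < a := lt_of_le_of_lt hx ha
    have hb0 : 0 < b := lt_of_le_of_lt hx hb
    have := (Real.sqrt_inj (by linarith) (by linarith)).1 hab
    linarith
  rw [nuttallQ, ← himg,
    integral_image_eq_integral_abs_deriv_smul measurableSet_Ioi hderiv hinj,
    ← MeasureTheory.integral_const_mul]
  refine setIntegral_congr_fun measurableSet_Ioi fun y hy => ?_
  have hy0 : 0 < y := lt_of_le_of_lt hx hy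
  simp only [smul_eq_mul]
  have hsy : (0:ℝ) < 2*y := by linarith
  have habs : |(Real.sqrt (2*y))⁻¹| = (Real.sqrt (2*y))⁻¹ :=
    abs_of_nonneg (by positivity)
  have harg : Real.sqrt (2*lam) * Real.sqrt (2*y) = 2 * Real.sqrt (lam*y) := by
    rw [← Real.sqrt_mul (by positivity : (0:ℝ) ≤ 2*lam),
      show (2*lam)*(2*y) = 2^2*(lam*y) by ring,
      Real.sqrt_mul (by positivity : (0:ℝ) ≤ (2:ℝ)^2),
      Real.sqrt_sq (by norm_num : (0:ℝ) ≤ 2)]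
  have hpow : ∀ (w : ℝ), 0 ≤ w → ∀ n : ℕ, Real.sqrt w ^ n = w ^ ((n:ℝ)/2) := by
    intro w hw n
    rw [Real.sqrt_eq_rpow, ← Real.rpow_natCast (w ^ ((1:ℝ)/2)) n, ← Real.rpow_mul hw,
      show 1/2*(n:ℝ) = (n:ℝ)/2 by ring]
  have hinv : (Real.sqrt (2*y))⁻¹ = (2*y) ^ (-(1/2) : ℝ) := by
    rw [Real.sqrt_eq_rpow, ← Real.rpow_neg hsy.le]
  rw [habs, hinv, Real.sq_sqrt hsy.le, Real.sq_sqrt (by positivity : (0:ℝ) ≤ 2*lam), harg,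
    besselI_two_sqrt (t-s) (lam*y) (by positivity),
    hpow (lam*y) (by positivity) (t-s),
    hpow (2*y) hsy.le (s+t-2*i+1),
    show -(2*y + 2*lam)/2 = -y + -lam by ring, Real.exp_add,
    Real.mul_rpow hlam.le hy0.le, Real.mul_rpow (by norm_num : (0:ℝ) ≤ 2) hy0.le,
    Real.mul_rpow (by norm_num : (0:ℝ) ≤ 2) hy0.le]
  have hc1 : ((s+t-2*i+1 : ℕ):ℝ) = (s:ℝ)+t-2*i+1 := by
    push_cast [Nat.cast_sub h2i]; ring
  have hc2 : ((t-s:ℕ):ℝ) = (t:ℝ)-s := by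
    push_cast [Nat.cast_sub hst]; ring
  have hc3 : y ^ (t-i) = y ^ ((t:ℝ)-(i:ℝ)) := by
    rw [← Real.rpow_natCast y (t-i), Nat.cast_sub (le_trans his hst)]
  have e1 : ((t-s).factorial : ℝ) * (((t-s).factorial : ℝ))⁻¹ = 1 :=
    mul_inv_cancel₀ (Nat.cast_ne_zero.2 (Nat.factorial_ne_zero _))
  have e2 : lam ^ (((s:ℝ)-t)/2) * lam ^ (((t:ℝ)-s)/2) = 1 := by
    rw [← Real.rpow_add hlam, show ((s:ℝ)-t)/2 + ((t:ℝ)-s)/2 = 0 by ring, Real.rpow_zero]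
  have e3 : Real.exp lam * Real.exp (-lam) = 1 := by
    rw [← Real.exp_add]; simp
  have e4 : (2:ℝ) ^ ((2*(i:ℝ)-s-t)/2) * ((2:ℝ) ^ (-(1/2):ℝ) * (2:ℝ) ^ (((s:ℝ)+t-2*i+1)/2)) = 1 := by
    rw [← Real.rpow_add two_pos, ← Real.rpow_add two_pos,
      show (2*(i:ℝ)-s-t)/2 + (-(1/2) + ((s:ℝ)+t-2*i+1)/2) = 0 by ring, Real.rpow_zero]
  have e5 : y ^ (-(1/2):ℝ) * (y ^ (((s:ℝ)+t-2*i+1)/2) * y ^ (((t:ℝ)-s)/2)) = y ^ ((t:ℝ)-(i:ℝ)) := by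
    rw [← Real.rpow_add hy0, ← Real.rpow_add hy0,
      show (-(1/2) + (((s:ℝ)+t-2*i+1)/2 + ((t:ℝ)-s)/2)) = (t:ℝ)-(i:ℝ) by ring]
  rw [hc1, hc2, hc3]
  symm
  calc ((t-s).factorial : ℝ) * lam ^ (((s:ℝ)-t)/2) * Real.exp lam *
        (2:ℝ) ^ ((2*(i:ℝ)-s-t)/2) *
        ((2:ℝ) ^ (-(1/2):ℝ) * y ^ (-(1/2):ℝ) *
          ((2:ℝ) ^ (((s:ℝ)+t-2*i+1)/2) * y ^ (((s:ℝ)+t-2*i+1)/2) *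
            (Real.exp (-y) * Real.exp (-lam)) *
            (lam ^ (((t:ℝ)-s)/2) * y ^ (((t:ℝ)-s)/2) *
              hyp0F1 ((t:ℝ)-s + 1) (lam*y) / ((t-s).factorial : ℝ))))
      = (((t-s).factorial : ℝ) * (((t-s).factorial : ℝ))⁻¹) *
          ((lam ^ (((s:ℝ)-t)/2) * lam ^ (((t:ℝ)-s)/2)) *
            ((Real.exp lam * Real.exp (-lam)) *
              (((2:ℝ) ^ ((2*(i:ℝ)-s-t)/2) * ((2:ℝ) ^ (-(1/2):ℝ) * (2:ℝ) ^ (((s:ℝ)+t-2*i+1)/2))) *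
                ((y ^ (-(1/2):ℝ) * (y ^ (((s:ℝ)+t-2*i+1)/2) * y ^ (((t:ℝ)-s)/2))) *
                  (Real.exp (-y) * hyp0F1 ((t:ℝ)-s + 1) (lam*y)))))) := by
        rw [div_eq_mul_inv]; ring
    _ = y ^ ((t:ℝ)-(i:ℝ)) * Real.exp (-y) * hyp0F1 ((t:ℝ)-s + 1) (lam*y) := by
        rw [e1, e2, e3, e4, e5]; ring
end

section
/- Let f_1, ..., f_s be functions analytic near 0, let 0 ≤ L ≤ s, and let λ_1 > ... > λ_L > 0 be distinct. Then the limit as λ_{L+1}, ..., λ_s → 0 (taken as distinct values tending to 0) of det[f_i(λ_j)]_{i,j=1..s} / ∏_{i<j} (λ_i - λ_j) equals det[M] / (∏_{i<j≤L} (λ_i - λ_j) · ∏_{i=1}^L λ_i^{s-L} · ∏_{i=1}^{s-L} (i-1)!), where M is the s × s matrix whose first L columns are f_i(λ_j) (j = 1..L) and whose column L+k (k = 1..s-L) is f_i^{(s-L-k)}(0). -/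
open Filter Finset Polynomial

/-- Divided difference (Lagrange form) of `g` at nodes `x`. -/
noncomputable def dd {n : ℕ} (x : Fin n → ℝ) (g : ℝ → ℝ) : ℝ :=
  ∑ w, g (x w) / ∏ u ∈ Finset.univ.erase w, (x w - x u)

lemma dd_comp_perm {n : ℕ} (x : Fin n → ℝ) (g : ℝ → ℝ) (σ : Equiv.Perm (Fin n)) :
    dd (x ∘ σ) g = dd x g := by
  unfold dd
  rw [← Equiv.sum_comp σ (fun w => g (x w) / ∏ u ∈ Finset.univ.erase w, (x w - x u))]
  refine Finset.sum_congr rfl fun w _ => ?_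
  simp only [Function.comp_apply]
  congr 1
  have : (Finset.univ.erase w).map σ.toEmbedding = Finset.univ.erase (σ w) := by
    rw [Finset.map_erase, Finset.map_univ_equiv]
    rfl
  rw [← this, Finset.prod_map]
  rfl

/-- Lagrange interpolation polynomial of `g` at nodes `x`. -/
noncomputable def interp {n : ℕ} (x : Fin n → ℝ) (g : ℝ → ℝ) : Polynomial ℝ :=
  ∑ w, Polynomial.C (g (x w) / ∏ u ∈ Finset.univ.erase w, (x w - x u)) *
    ∏ u ∈ Finset.univ.erase w, (Polynomial.X - Polynomial.C (x u))

lemma nodal_natDegree {t : ℕ} (x : Fin (t+1) → ℝ) (w : Fin (t+1)) :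
    (∏ u ∈ Finset.univ.erase w, (Polynomial.X - Polynomial.C (x u))).natDegree = t := by
  rw [Polynomial.natDegree_prod_of_monic _ _ (fun u _ => Polynomial.monic_X_sub_C (x u))]
  simp [Finset.card_erase_of_mem]

lemma interp_natDegree_le {t : ℕ} (x : Fin (t+1) → ℝ) (g : ℝ → ℝ) :
    (interp x g).natDegree ≤ t := by
  refine Polynomial.natDegree_sum_le_of_forall_le _ _ fun w _ => ?_
  refine (Polynomial.natDegree_C_mul_le _ _).trans ?_
  rw [nodal_natDegree]

lemma interp_coeff {t : ℕ} (x : Fin (t+1) → ℝ) (g : ℝ → ℝ) :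
    (interp x g).coeff t = dd x g := by
  unfold interp dd
  rw [Polynomial.finset_sum_coeff]
  refine Finset.sum_congr rfl fun w _ => ?_
  rw [Polynomial.coeff_C_mul]
  have hm : (∏ u ∈ Finset.univ.erase w, (Polynomial.X - Polynomial.C (x u))).Monic :=
    Polynomial.monic_prod_of_monic _ _ (fun u _ => Polynomial.monic_X_sub_C (x u))
  have : (∏ u ∈ Finset.univ.erase w, (Polynomial.X - Polynomial.C (x u))).coeff t = 1 := by
    have := hm.coeff_natDegree
    rwa [nodal_natDegree] at this
  rw [this, mul_one]

lemma interp_eval {n : ℕ} (x : Fin n → ℝ) (hx : Function.Injective x) (g : ℝ → ℝ)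
    (w : Fin n) : (interp x g).eval (x w) = g (x w) := by
  unfold interp
  rw [Polynomial.eval_finset_sum]
  rw [Finset.sum_eq_single w]
  · rw [Polynomial.eval_mul, Polynomial.eval_C, Polynomial.eval_prod]
    simp only [Polynomial.eval_sub, Polynomial.eval_X, Polynomial.eval_C]
    rw [div_mul_cancel₀]
    exact Finset.prod_ne_zero_iff.mpr fun u hu =>
      sub_ne_zero.mpr (fun h => (Finset.mem_erase.mp hu).1 (hx h).symm)
  · intro w' _ hw'
    rw [Polynomial.eval_mul, Polynomial.eval_prod]
    apply mul_eq_zero_of_right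
    refine Finset.prod_eq_zero (Finset.mem_erase.mpr ⟨fun h => hw' h.symm, Finset.mem_univ w⟩) ?_
    simp
  · intro h; exact absurd (Finset.mem_univ w) h

lemma iterated_rolle : ∀ (n : ℕ) (h : ℝ → ℝ) (x : Fin (n+1) → ℝ), StrictMono x →
    (∀ k : ℕ, ContinuousOn (iteratedDeriv k h) (Set.Icc (x 0) (x (Fin.last n)))) →
    (∀ w, h (x w) = 0) →
    ∃ ξ ∈ Set.Icc (x 0) (x (Fin.last n)), iteratedDeriv n h ξ = 0 := by
  intro n
  induction n with
  | zero =>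
    intro h x _ _ hz
    exact ⟨x 0, ⟨le_refl _, le_of_eq (by norm_num)⟩, by simpa using hz 0⟩
  | succ n IH =>
    intro h x hx hc hz
    have hc0 : ContinuousOn h (Set.Icc (x 0) (x (Fin.last (n+1)))) := by
      simpa [iteratedDeriv_zero] using hc 0
    have hstep : ∀ w : Fin (n+1), ∃ c ∈ Set.Ioo (x w.castSucc) (x w.succ), deriv h c = 0 := by
      intro w
      refine exists_deriv_eq_zero (hx (Fin.castSucc_lt_succ (i := w))) ?_ (by rw [hz, hz])
      refine hc0.mono (Set.Icc_subset_Icc ?_ ?_)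
      · exact hx.monotone (Fin.zero_le _)
      · exact hx.monotone (Fin.le_last _)
    choose y hy1 hy2 using hstep
    have hysm : StrictMono y := by
      intro a b hab
      have h1 : y a < x a.succ := (hy1 a).2
      have h2 : x b.castSucc < y b := (hy1 b).1
      have h3 : x a.succ ≤ x b.castSucc := hx.monotone (by
        rw [Fin.le_def, Fin.val_succ, Fin.coe_castSucc]
        exact hab)
      linarith
    have hsub : Set.Icc (y 0) (y (Fin.last n)) ⊆ Set.Icc (x 0) (x (Fin.last (n+1))) := by
      refine Set.Icc_subset_Icc ?_ ?_
      · refine le_of_lt (lt_of_le_of_lt ?_ (hy1 0).1)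
        exact hx.monotone (Fin.zero_le _)
      · refine le_of_lt (lt_of_lt_of_le (hy1 (Fin.last n)).2 ?_)
        exact hx.monotone (by rw [Fin.succ_last])
    obtain ⟨ξ, hmem, hd⟩ := IH (deriv h) y hysm
      (fun k => by
        rw [← iteratedDeriv_succ']
        exact (hc (k+1)).mono hsub) hy2
    exact ⟨ξ, hsub hmem, by rwa [iteratedDeriv_succ']⟩

lemma dd_mvt (t : ℕ) (g : ℝ → ℝ) (r : ℝ) (hg : AnalyticOnNhd ℝ g (Metric.ball 0 r))
    (x : Fin (t+1) → ℝ) (hx : StrictMono x)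
    (hsub : Set.Icc (x 0) (x (Fin.last t)) ⊆ Metric.ball (0:ℝ) r) :
    ∃ ξ ∈ Set.Icc (x 0) (x (Fin.last t)), iteratedDeriv t g ξ = t.factorial * dd x g := by
  set P := interp x g with hP
  set h : ℝ → ℝ := fun y => g y - P.eval y with hh
  -- iterated derivatives of h on the ball
  have hiter : ∀ (k : ℕ), ∀ y ∈ Metric.ball (0:ℝ) r,
      deriv^[k] h y = deriv^[k] g y - (Polynomial.derivative^[k] P).eval y := by
    intro k
    induction k with
    | zero => intro y _; simp [hh]
    | succ k IH =>
      intro y hy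
      rw [Function.iterate_succ_apply', Function.iterate_succ_apply',
        Function.iterate_succ_apply']
      have hev : deriv^[k] h =ᶠ[nhds y] fun z => deriv^[k] g z - (derivative^[k] P).eval z := by
        filter_upwards [Metric.isOpen_ball.mem_nhds hy] with z hz using IH z hz
      rw [hev.deriv_eq]
      rw [deriv_fun_sub ((hg.iterated_deriv k y hy).differentiableAt) (Polynomial.differentiableAt _)]
      rw [Polynomial.deriv]
  have hcont : ∀ k : ℕ, ContinuousOn (iteratedDeriv k h) (Set.Icc (x 0) (x (Fin.last t))) := by
    intro k
    rw [iteratedDeriv_eq_iterate]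
    refine ContinuousOn.congr (f := fun z => deriv^[k] g z - (derivative^[k] P).eval z) ?_ ?_
    · refine ContinuousOn.sub ?_ (Polynomial.continuous _).continuousOn
      rw [← iteratedDeriv_eq_iterate]
      have := (hg.iterated_deriv k).continuousOn (f := deriv^[k] g)
      rw [← iteratedDeriv_eq_iterate] at this
      exact this.mono hsub
    · intro y hy
      exact hiter k y (hsub hy)
  have hzero : ∀ w, h (x w) = 0 := fun w => by
    rw [hh]; simp only; rw [interp_eval x hx.injective g w]; ring
  obtain ⟨ξ, hmem, hz⟩ := iterated_rolle t h x hx hcont hzero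
  refine ⟨ξ, hmem, ?_⟩
  have h1 : deriv^[t] h ξ = 0 := by rwa [iteratedDeriv_eq_iterate] at hz
  rw [hiter t ξ (hsub hmem)] at h1
  -- compute derivative^[t] P
  have hdeg : (derivative^[t] P).natDegree ≤ 0 := by
    refine (Polynomial.natDegree_iterate_derivative P t).trans ?_
    have := interp_natDegree_le x g
    rw [hP]
    omega
  have hC : derivative^[t] P = Polynomial.C ((t.factorial : ℝ) * dd x g) := by
    rw [Polynomial.eq_C_of_natDegree_le_zero hdeg]
    congr 1
    rw [Polynomial.coeff_iterate_derivative]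
    simp only [zero_add, Nat.descFactorial_self, smul_eq_mul]
    rw [interp_coeff x g]
    push_cast
    ring
  rw [iteratedDeriv_eq_iterate]
  rw [hC] at h1
  simp only [Polynomial.eval_C] at h1
  linarith

lemma dd_tendsto (n t : ℕ) (hn : n = t + 1) (g : ℝ → ℝ) (hg : AnalyticAt ℝ g 0) :
    Filter.Tendsto (fun x : Fin n → ℝ => dd x g)
      (nhdsWithin 0 {x | Function.Injective x})
      (nhds (iteratedDeriv t g 0 / t.factorial)) := by
  subst hn
  obtain ⟨r, hr, hana⟩ := hg.exists_ball_analyticOnNhd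
  have hcont : ContinuousAt (iteratedDeriv t g) 0 := by
    have h2 := (hana.iterated_deriv t) 0 (Metric.mem_ball_self hr)
    rw [iteratedDeriv_eq_iterate]
    exact h2.continuousAt
  have hfac : (0:ℝ) < t.factorial := by positivity
  rw [Metric.tendsto_nhdsWithin_nhds]
  intro ε hε
  obtain ⟨δ₂, hδ₂, hδ₂'⟩ := Metric.continuousAt_iff.mp hcont (ε * t.factorial)
    (by positivity)
  refine ⟨min δ₂ r, by positivity, ?_⟩
  intro x hinj hdist
  have hδpos : (0:ℝ) < min δ₂ r := by positivity
  have hxb : ∀ w, |x w| < min δ₂ r := by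
    intro w
    have := (dist_pi_lt_iff hδpos).mp hdist w
    simpa [Real.dist_eq] using this
  -- sort the nodes
  set σ := Tuple.sort x with hσ
  have hsm : StrictMono (x ∘ σ) :=
    (Tuple.monotone_sort x).strictMono_of_injective (hinj.comp σ.injective)
  have hsub : Set.Icc ((x ∘ σ) 0) ((x ∘ σ) (Fin.last t)) ⊆ Metric.ball (0:ℝ) r := by
    intro y hy
    rw [Metric.mem_ball, Real.dist_eq, sub_zero]
    have h1 := (x ∘ σ) 0
    have hb0 := hxb (σ 0)
    have hbl := hxb (σ (Fin.last t))
    have : |y| < min δ₂ r := by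
      rw [abs_lt] at hb0 hbl ⊢
      exact ⟨by have := hy.1; simp only [Function.comp_apply] at this; linarith [hb0.1],
        by have := hy.2; simp only [Function.comp_apply] at this; linarith [hbl.2]⟩
    exact lt_of_lt_of_le this (min_le_right _ _)
  obtain ⟨ξ, hmem, hmvt⟩ := dd_mvt t g r hana (x ∘ σ) hsm hsub
  have hξ : |ξ| < min δ₂ r := by
    have hb0 := hxb (σ 0); have hbl := hxb (σ (Fin.last t))
    rw [abs_lt] at hb0 hbl ⊢
    constructor
    · have := hmem.1; simp only [Function.comp_apply] at this; linarith [hb0.1]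
    · have := hmem.2; simp only [Function.comp_apply] at this; linarith [hbl.2]
  have hdd : dd x g = iteratedDeriv t g ξ / t.factorial := by
    rw [← dd_comp_perm x g σ]
    field_simp [hmvt]
    rw [hmvt]; ring
  rw [Real.dist_eq, hdd]
  rw [div_sub_div_same, abs_div, abs_of_pos hfac, div_lt_iff₀ hfac]
  have := hδ₂' (x := ξ) (by rw [Real.dist_eq, sub_zero]; exact lt_of_lt_of_le hξ (min_le_left _ _))
  rw [Real.dist_eq] at this
  linarith

def nodes {m : ℕ} (μ : Fin m → ℝ) (k : ℕ) : Fin (m - k) → ℝ :=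
  fun w => μ ⟨k + w.val, by have := w.isLt; omega⟩

lemma append_of_lt {L m : ℕ} (lam : Fin L → ℝ) (μ : Fin m → ℝ) (j : Fin (L+m))
    (hj : (j : ℕ) < L) : Fin.append lam μ j = lam ⟨(j : ℕ), hj⟩ := by
  conv_lhs => rw [show j = Fin.castAdd m ⟨(j:ℕ), hj⟩ from Fin.ext rfl]
  rw [Fin.append_left]

lemma append_of_ge {L m : ℕ} (lam : Fin L → ℝ) (μ : Fin m → ℝ) (j : Fin (L+m))
    (hj : ¬ (j : ℕ) < L) :
    Fin.append lam μ j = μ ⟨(j : ℕ) - L, by have := j.isLt; omega⟩ := by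
  conv_lhs => rw [show j = Fin.natAdd L ⟨(j:ℕ) - L, by have := j.isLt; omega⟩ from
    Fin.ext (by simp [Fin.natAdd]; omega)]
  rw [Fin.append_right]

noncomputable def NN (L m : ℕ) (μ : Fin m → ℝ) : Matrix (Fin (L+m)) (Fin (L+m)) ℝ :=
  Matrix.of fun p j =>
    if hp : (p : ℕ) < L then (if p = j then 1 else 0)
    else if hj : (j : ℕ) < L then 0
    else if hk : (j : ℕ) ≤ (p : ℕ) then
      (∏ u ∈ Finset.univ.erase
          (⟨(p : ℕ) - (j : ℕ), by have := p.isLt; have := j.isLt; omega⟩ :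
            Fin (m - ((j : ℕ) - L))),
        (μ ⟨(p : ℕ) - L, by have := p.isLt; omega⟩ - nodes μ ((j : ℕ) - L) u))⁻¹
    else 0


lemma prod_erase_eq_Ioi {m : ℕ} (μ : Fin m → ℝ) (a : Fin m) (K : ℕ) (hK : K = (a:ℕ))
    (c : Fin (m - K)) (hc : (c:ℕ) = 0) (A : Fin m) (hA : A = a) :
    ∏ u ∈ Finset.univ.erase c, (μ A - nodes μ K u)
      = ∏ b ∈ Finset.Ioi a, (μ a - μ b) := by
  rw [hA]
  subst hK
  refine Finset.prod_nbij' (fun u => (⟨(a:ℕ) + u.val, by have := u.isLt; omega⟩ : Fin m))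
    (fun b => (⟨(b:ℕ) - (a:ℕ), by have := b.isLt; omega⟩ : Fin (m - (a:ℕ)))) ?_ ?_ ?_ ?_ ?_
  · intro u hu
    rw [Finset.mem_Ioi, Fin.lt_def]
    have hu0 : (u : ℕ) ≠ 0 := by
      intro h0
      exact (Finset.mem_erase.mp hu).1 (Fin.ext (by omega))
    simp only
    omega
  · intro b hb
    rw [Finset.mem_Ioi, Fin.lt_def] at hb
    refine Finset.mem_erase.mpr ⟨?_, Finset.mem_univ _⟩
    intro h0
    have := congrArg Fin.val h0
    simp only at this
    omega
  · intro u _; apply Fin.ext; simp only; omega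
  · intro b hb
    rw [Finset.mem_Ioi, Fin.lt_def] at hb
    apply Fin.ext; simp only; omega
  · intro u _
    rfl

lemma NN_blockTriangular (L m : ℕ) (μ : Fin m → ℝ) :
    (NN L m μ).BlockTriangular OrderDual.toDual := by
  intro p j h
  have hpj : p < j := h
  unfold NN
  simp only [Matrix.of_apply]
  rcases Nat.lt_or_ge (p : ℕ) L with hp | hp
  · rw [dif_pos hp, if_neg (ne_of_lt hpj)]
  · rw [dif_neg (by omega)]
    rcases Nat.lt_or_ge (j : ℕ) L with hj | hj
    · omega
    · rw [dif_neg (by omega), dif_neg (by have := hpj; rw [Fin.lt_def] at this; omega)]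

lemma NN_det (L m : ℕ) (μ : Fin m → ℝ) :
    (NN L m μ).det = ∏ a : Fin m, (∏ b ∈ Finset.Ioi a, (μ a - μ b))⁻¹ := by
  rw [Matrix.det_of_lowerTriangular _ (NN_blockTriangular L m μ)]
  rw [Fin.prod_univ_add]
  have h1 : ∀ a : Fin L, NN L m μ (Fin.castAdd m a) (Fin.castAdd m a) = 1 := by
    intro a
    unfold NN
    simp only [Matrix.of_apply]
    rw [dif_pos (by simpa using a.isLt)]
    simp
  have h2 : ∀ a : Fin m, NN L m μ (Fin.natAdd L a) (Fin.natAdd L a)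
      = (∏ b ∈ Finset.Ioi a, (μ a - μ b))⁻¹ := by
    intro a
    unfold NN
    simp only [Matrix.of_apply, Fin.coe_natAdd]
    rw [dif_neg (by omega), dif_neg (by omega), dif_pos le_rfl]
    congr 1
    exact prod_erase_eq_Ioi μ a _ (by omega) _ (by simp) _ (Fin.ext (by simp))
  calc (∏ a : Fin L, NN L m μ (Fin.castAdd m a) (Fin.castAdd m a)) *
        ∏ a : Fin m, NN L m μ (Fin.natAdd L a) (Fin.natAdd L a)
      = (∏ _a : Fin L, (1:ℝ)) * ∏ a : Fin m, (∏ b ∈ Finset.Ioi a, (μ a - μ b))⁻¹ := by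
        rw [Finset.prod_congr rfl fun a _ => h1 a, Finset.prod_congr rfl fun a _ => h2 a]
    _ = ∏ a : Fin m, (∏ b ∈ Finset.Ioi a, (μ a - μ b))⁻¹ := by simp

lemma sum_col {L m : ℕ} (g' : ℝ → ℝ) (μ : Fin m → ℝ) (j : Fin (L+m)) (hj : ¬ (j:ℕ) < L) :
    ∑ b : Fin m, g' (μ b) * NN L m μ (Fin.natAdd L b) j
      = dd (nodes μ ((j:ℕ) - L)) g' := by
  have hjm : (j:ℕ) - L < m := by have := j.isLt; omega
  rw [← Finset.sum_subset
    (Finset.filter_subset (fun b : Fin m => (j:ℕ) - L ≤ (b:ℕ)) Finset.univ) ?_]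
  · unfold dd
    refine Finset.sum_nbij'
      (fun b : Fin m => (⟨(b:ℕ) - ((j:ℕ) - L), by have := b.isLt; omega⟩ : Fin (m - ((j:ℕ) - L))))
      (fun w : Fin (m - ((j:ℕ) - L)) => (⟨((j:ℕ) - L) + (w:ℕ), by have := w.isLt; omega⟩ : Fin m)) ?_ ?_ ?_ ?_ ?_
    · intro b _; exact Finset.mem_univ _
    · intro w _
      exact Finset.mem_filter.mpr ⟨Finset.mem_univ _, by simp⟩
    · intro b hb
      have := (Finset.mem_filter.mp hb).2
      apply Fin.ext; simp only; omega
    · intro w _; apply Fin.ext; simp only; omega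
    · intro b hb
      have hkb := (Finset.mem_filter.mp hb).2
      unfold NN
      simp only [Matrix.of_apply, Fin.coe_natAdd]
      rw [dif_neg (by omega), dif_neg hj, dif_pos (by omega)]
      rw [div_eq_mul_inv]
      congr 1
      · exact congrArg g' (congrArg μ (Fin.ext (by simp only [nodes]; omega)))
      · congr 1
        refine Finset.prod_congr (congrArg _ (Fin.ext (by simp only; omega))) fun u _ => ?_
        refine congrArg₂ (· - ·) (congrArg μ (Fin.ext ?_)) rfl
        simp only [nodes]
        omega
  · intro b _ hb
    rw [Finset.mem_filter, not_and] at hb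
    have hbneg := hb (Finset.mem_univ b)
    unfold NN
    simp only [Matrix.of_apply, Fin.coe_natAdd]
    rw [dif_neg (by omega), dif_neg hj, dif_neg (by omega), mul_zero]

lemma mul_NN (L m : ℕ) (g : Fin (L+m) → ℝ → ℝ) (lam : Fin L → ℝ) (μ : Fin m → ℝ) :
    (Matrix.of fun i j => g i (Fin.append lam μ j)) * NN L m μ
      = Matrix.of fun i j : Fin (L+m) =>
          if hj : (j : ℕ) < L then g i (lam ⟨(j:ℕ), hj⟩)
          else dd (nodes μ ((j:ℕ) - L)) (g i) := by
  ext i j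
  rw [Matrix.mul_apply]
  simp only [Matrix.of_apply]
  by_cases hj : (j : ℕ) < L
  · rw [dif_pos hj]
    rw [Finset.sum_eq_single j]
    · unfold NN
      simp only [Matrix.of_apply]
      rw [dif_pos hj]
      simp [append_of_lt lam μ j hj]
    · intro p _ hpj
      unfold NN
      simp only [Matrix.of_apply]
      rcases Nat.lt_or_ge (p:ℕ) L with hp | hp
      · rw [dif_pos hp, if_neg hpj, mul_zero]
      · rw [dif_neg (by omega), dif_pos hj, mul_zero]
    · intro h; exact absurd (Finset.mem_univ j) h
  · rw [dif_neg hj]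
    rw [Fin.sum_univ_add]
    have hzero : ∀ a : Fin L,
        g i (Fin.append lam μ (Fin.castAdd m a)) * NN L m μ (Fin.castAdd m a) j = 0 := by
      intro a
      unfold NN
      simp only [Matrix.of_apply]
      rw [dif_pos (by simpa using a.isLt)]
      rw [if_neg (by intro h; rw [← h] at hj; exact hj (by simpa using a.isLt)), mul_zero]
    rw [Finset.sum_congr rfl (fun a _ => hzero a), Finset.sum_const_zero, zero_add]
    rw [← sum_col (g i) μ j hj]
    refine Finset.sum_congr rfl fun b _ => ?_
    rw [Fin.append_right]

lemma prod_Ioi_eq_ite {n : ℕ} (F : Fin n → Fin n → ℝ) (i : Fin n) :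
    ∏ j ∈ Finset.Ioi i, F i j = ∏ j, if i < j then F i j else 1 := by
  rw [Finset.prod_ite, Finset.prod_const_one, mul_one]
  apply Finset.prod_congr _ fun _ _ => rfl
  ext j
  simp [Finset.mem_Ioi, Finset.mem_filter]

lemma vandermonde_split (L m : ℕ) (lam : Fin L → ℝ) (μ : Fin m → ℝ) :
    (∏ i : Fin (L+m), ∏ j ∈ Finset.Ioi i,
        (Fin.append lam μ i - Fin.append lam μ j))
      = (∏ i : Fin L, ∏ j ∈ Finset.Ioi i, (lam i - lam j)) *
        (∏ a : Fin L, ∏ b : Fin m, (lam a - μ b)) *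
        (∏ a : Fin m, ∏ b ∈ Finset.Ioi a, (μ a - μ b)) := by
  have key : ∀ i : Fin (L+m), ∏ j ∈ Finset.Ioi i,
      (Fin.append lam μ i - Fin.append lam μ j)
      = ∏ j, if i < j then Fin.append lam μ i - Fin.append lam μ j else 1 :=
    fun i => prod_Ioi_eq_ite (fun i j => Fin.append lam μ i - Fin.append lam μ j) i
  rw [Finset.prod_congr rfl fun i _ => key i]
  rw [Fin.prod_univ_add]
  have inner : ∀ i : Fin (L+m), ∏ j : Fin (L+m),
      (if i < j then Fin.append lam μ i - Fin.append lam μ j else 1)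
      = (∏ a : Fin L, if i < Fin.castAdd m a then Fin.append lam μ i - lam a else 1) *
        (∏ b : Fin m, if i < Fin.natAdd L b then Fin.append lam μ i - μ b else 1) := by
    intro i
    rw [Fin.prod_univ_add]
    congr 1
    · exact Finset.prod_congr rfl fun a _ => by rw [Fin.append_left]
    · exact Finset.prod_congr rfl fun b _ => by rw [Fin.append_right]
  rw [Finset.prod_congr rfl fun a (_ : a ∈ Finset.univ) => inner (Fin.castAdd m a),
    Finset.prod_congr rfl fun b (_ : b ∈ Finset.univ) => inner (Fin.natAdd L b)]
  rw [Finset.prod_mul_distrib, Finset.prod_mul_distrib]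
  have T1 : ∏ a : Fin L, ∏ a' : Fin L,
      (if Fin.castAdd m a < Fin.castAdd m a' then Fin.append lam μ (Fin.castAdd m a) - lam a' else 1)
      = ∏ i : Fin L, ∏ j ∈ Finset.Ioi i, (lam i - lam j) := by
    refine Finset.prod_congr rfl fun a _ => ?_
    rw [prod_Ioi_eq_ite (fun i j => lam i - lam j) a]
    refine Finset.prod_congr rfl fun a' _ => ?_
    rw [Fin.append_left]
    have hiff : Fin.castAdd m a < Fin.castAdd m a' ↔ a < a' := by
      rw [Fin.lt_def, Fin.lt_def, Fin.coe_castAdd, Fin.coe_castAdd]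
    simp only [hiff]
  have T2 : ∏ a : Fin L, ∏ b : Fin m,
      (if Fin.castAdd m a < Fin.natAdd L b then Fin.append lam μ (Fin.castAdd m a) - μ b else 1)
      = ∏ a : Fin L, ∏ b : Fin m, (lam a - μ b) := by
    refine Finset.prod_congr rfl fun a _ => Finset.prod_congr rfl fun b _ => ?_
    rw [if_pos (by rw [Fin.lt_def]; simp; omega), Fin.append_left]
  have T3 : ∏ b : Fin m, ∏ a : Fin L,
      (if Fin.natAdd L b < Fin.castAdd m a then Fin.append lam μ (Fin.natAdd L b) - lam a else 1)
      = 1 := by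
    refine Finset.prod_eq_one fun b _ => Finset.prod_eq_one fun a _ => ?_
    rw [if_neg (by rw [Fin.lt_def]; simp; omega)]
  have T4 : ∏ b : Fin m, ∏ b' : Fin m,
      (if Fin.natAdd L b < Fin.natAdd L b' then Fin.append lam μ (Fin.natAdd L b) - μ b' else 1)
      = ∏ a : Fin m, ∏ b ∈ Finset.Ioi a, (μ a - μ b) := by
    refine Finset.prod_congr rfl fun b _ => ?_
    rw [prod_Ioi_eq_ite (fun i j => μ i - μ j) b]
    refine Finset.prod_congr rfl fun b' _ => ?_
    rw [Fin.append_right]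
    have hiff : Fin.natAdd L b < Fin.natAdd L b' ↔ b < b' := by
      rw [Fin.lt_def, Fin.lt_def, Fin.coe_natAdd, Fin.coe_natAdd]
      omega
    simp only [hiff]
  rw [T1, T2, T3, T4]
  ring

noncomputable def BB (L m : ℕ) (f : Fin (L+m) → ℝ → ℝ) (lam : Fin L → ℝ)
    (μ : Fin m → ℝ) : Matrix (Fin (L+m)) (Fin (L+m)) ℝ :=
  Matrix.of fun i j =>
    if hj : (j : ℕ) < L then f i (lam ⟨(j:ℕ), hj⟩)
    else dd (nodes μ ((j:ℕ) - L)) (f i)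


lemma mu_injective {L m : ℕ} {lam : Fin L → ℝ} {μ : Fin m → ℝ}
    (hμ : Function.Injective (Fin.append lam μ)) : Function.Injective μ := by
  intro a b hab
  have h1 : Fin.append lam μ (Fin.natAdd L a) = Fin.append lam μ (Fin.natAdd L b) := by
    rw [Fin.append_right, Fin.append_right]; exact hab
  have h2 := congrArg Fin.val (hμ h1)
  simp only [Fin.coe_natAdd] at h2
  exact Fin.ext (by omega)

lemma det_eq (L m : ℕ) (f : Fin (L+m) → ℝ → ℝ) (lam : Fin L → ℝ) (μ : Fin m → ℝ)
    (hμ : Function.Injective (Fin.append lam μ)) :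
    (Matrix.of fun i j => f i (Fin.append lam μ j)).det /
        (∏ i : Fin (L + m), ∏ j ∈ Finset.Ioi i,
          (Fin.append lam μ i - Fin.append lam μ j))
      = (BB L m f lam μ).det /
        ((∏ i : Fin L, ∏ j ∈ Finset.Ioi i, (lam i - lam j)) *
          ∏ a : Fin L, ∏ b : Fin m, (lam a - μ b)) := by
  have hμinj := mu_injective hμ
  have hZ : (∏ a : Fin m, ∏ b ∈ Finset.Ioi a, (μ a - μ b)) ≠ 0 := by
    refine Finset.prod_ne_zero_iff.mpr fun a _ => Finset.prod_ne_zero_iff.mpr fun b hb => ?_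
    refine sub_ne_zero.mpr fun h => ?_
    have := hμinj h
    rw [this] at hb
    exact absurd (Finset.mem_Ioi.mp hb) (lt_irrefl b)
  have hdet := congrArg Matrix.det (mul_NN L m f lam μ)
  rw [Matrix.det_mul, NN_det] at hdet
  rw [Finset.prod_inv_distrib] at hdet
  have hA : (Matrix.of fun i j => f i (Fin.append lam μ j)).det
      = (BB L m f lam μ).det * (∏ a : Fin m, ∏ b ∈ Finset.Ioi a, (μ a - μ b)) := by
    have hBB : BB L m f lam μ = Matrix.of fun i j : Fin (L+m) =>
        if hj : (j : ℕ) < L then f i (lam ⟨(j:ℕ), hj⟩)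
        else dd (nodes μ ((j:ℕ) - L)) (f i) := rfl
    rw [hBB, ← hdet]
    field_simp
  rw [hA, vandermonde_split L m lam μ, mul_div_mul_right _ _ hZ]

lemma detM_eq (L m : ℕ) (f : Fin (L+m) → ℝ → ℝ) (lam : Fin L → ℝ) :
    (Matrix.of fun i j : Fin (L+m) =>
        if h : (j:ℕ) < L then f i (lam ⟨(j:ℕ), h⟩)
        else iteratedDeriv (L + m - 1 - (j:ℕ)) (f i) 0).det
      = (∏ i ∈ Finset.range m, (Nat.factorial i : ℝ)) *
        (Matrix.of fun i j : Fin (L+m) =>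
          if h : (j:ℕ) < L then f i (lam ⟨(j:ℕ), h⟩)
          else iteratedDeriv (L + m - 1 - (j:ℕ)) (f i) 0 /
            (L + m - 1 - (j:ℕ)).factorial).det := by
  have hM : (Matrix.of fun i j : Fin (L+m) =>
        if h : (j:ℕ) < L then f i (lam ⟨(j:ℕ), h⟩)
        else iteratedDeriv (L + m - 1 - (j:ℕ)) (f i) 0)
      = Matrix.of fun i j : Fin (L+m) =>
          (if (j:ℕ) < L then (1:ℝ) else ((L + m - 1 - (j:ℕ)).factorial : ℝ)) *
          (if h : (j:ℕ) < L then f i (lam ⟨(j:ℕ), h⟩)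
            else iteratedDeriv (L + m - 1 - (j:ℕ)) (f i) 0 /
              (L + m - 1 - (j:ℕ)).factorial) := by
    ext i j
    by_cases hj : (j:ℕ) < L
    · simp [hj]
    · simp only [Matrix.of_apply, if_neg hj, dif_neg hj]
      rw [mul_comm, div_mul_cancel₀]
      positivity
  rw [hM]
  refine (Matrix.det_mul_row _ _).trans ?_
  congr 1
  rw [Fin.prod_univ_add]
  have h1 : ∀ a : Fin L,
      (if ((Fin.castAdd m a : Fin (L+m)):ℕ) < L then (1:ℝ)
        else ((L + m - 1 - ((Fin.castAdd m a : Fin (L+m)):ℕ)).factorial : ℝ)) = 1 := by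
    intro a; rw [if_pos (by simpa using a.isLt)]
  have h2 : ∀ b : Fin m,
      (if ((Fin.natAdd L b : Fin (L+m)):ℕ) < L then (1:ℝ)
        else ((L + m - 1 - ((Fin.natAdd L b : Fin (L+m)):ℕ)).factorial : ℝ))
      = ((m - 1 - (b:ℕ)).factorial : ℝ) := by
    intro b
    rw [if_neg (by simp)]
    congr 2
    simp only [Fin.coe_natAdd]
    omega
  rw [Finset.prod_congr rfl fun a _ => h1 a, Finset.prod_congr rfl fun b _ => h2 b]
  rw [Finset.prod_const_one, one_mul]
  rw [Fin.prod_univ_eq_prod_range (fun i => ((m - 1 - i).factorial : ℝ)) m]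
  exact Finset.prod_range_reflect (fun i => ((i).factorial : ℝ)) m

lemma BB_tendsto (L m : ℕ) (f : Fin (L+m) → ℝ → ℝ) (hf : ∀ i, AnalyticAt ℝ (f i) 0)
    (lam : Fin L → ℝ) :
    Filter.Tendsto (fun μ : Fin m → ℝ => BB L m f lam μ)
      (nhdsWithin 0 {μ : Fin m → ℝ | Function.Injective (Fin.append lam μ)})
      (nhds (Matrix.of fun i j : Fin (L+m) =>
        if h : (j:ℕ) < L then f i (lam ⟨(j:ℕ), h⟩)
        else iteratedDeriv (L + m - 1 - (j:ℕ)) (f i) 0 /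
          (L + m - 1 - (j:ℕ)).factorial)) := by
  refine tendsto_pi_nhds.mpr ?_
  intro i
  rw [tendsto_pi_nhds]
  intro j
  by_cases hj : (j:ℕ) < L
  · simp only [BB, Matrix.of_apply, dif_pos hj]
    exact tendsto_const_nhds
  · simp only [BB, Matrix.of_apply, dif_neg hj]
    have hcomp : (fun μ : Fin m → ℝ => dd (nodes μ ((j:ℕ) - L)) (f i))
        = (fun ν : Fin (m - ((j:ℕ)-L)) → ℝ => dd ν (f i)) ∘
          (fun μ : Fin m → ℝ => nodes μ ((j:ℕ)-L)) := rfl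
    rw [hcomp]
    refine (dd_tendsto (m - ((j:ℕ)-L)) (L + m - 1 - (j:ℕ))
      (by have := j.isLt; omega) (f i) (hf i)).comp ?_
    rw [tendsto_nhdsWithin_iff]
    constructor
    · have hcont : Continuous (fun μ : Fin m → ℝ => nodes μ ((j:ℕ)-L)) :=
        continuous_pi fun w => continuous_apply _
      have h0 : nodes (0 : Fin m → ℝ) ((j:ℕ)-L) = 0 := rfl
      have := hcont.tendsto (0 : Fin m → ℝ)
      rw [h0] at this
      exact this.mono_left nhdsWithin_le_nhds
    · filter_upwards [self_mem_nhdsWithin] with μ hμ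
      have hμinj := mu_injective hμ
      intro u v huv
      have h2 := hμinj huv
      have h3 := congrArg Fin.val h2
      simp only [nodes] at h3
      exact Fin.ext (by omega)

/-- Let `f_1, ..., f_s` (with `s = L + m`) be analytic near `0`, and let
`λ_1 > ... > λ_L > 0`. Then, as the remaining variables `μ = (λ_{L+1}, ..., λ_s)` tend to `0`
through values keeping all coordinates of `(λ, μ)` distinct, the ratio
`det[f_i(λ_j)] / ∏_{i<j} (λ_i - λ_j)` tends to
`det M / (∏_{i<j≤L}(λ_i - λ_j) · ∏_{i=1}^L λ_i^(s-L) · ∏_{i=1}^(s-L)(i-1)!)`,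
where the first `L` columns of `M` are `f_i(λ_j)` and column `L+k` is derivatives of f at 0. -/
theorem det_ratio_limit_at_zero (L m : ℕ) (f : Fin (L + m) → ℝ → ℝ)
    (hf : ∀ i, AnalyticAt ℝ (f i) 0)
    (lam : Fin L → ℝ) (hpos : ∀ j, 0 < lam j) (hanti : StrictAnti lam) :
    Filter.Tendsto
      (fun μ : Fin m → ℝ =>
        Matrix.det (Matrix.of fun i j : Fin (L + m) => f i (Fin.append lam μ j)) /
          ∏ i : Fin (L + m), ∏ j ∈ Finset.Ioi i,
            (Fin.append lam μ i - Fin.append lam μ j))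
      (nhdsWithin 0 {μ : Fin m → ℝ | Function.Injective (Fin.append lam μ)})
      (nhds
        (Matrix.det (Matrix.of fun i j : Fin (L + m) =>
            if h : j.val < L then f i (lam ⟨j.val, h⟩)
            else iteratedDeriv (L + m - 1 - j.val) (f i) 0) /
          ((∏ i : Fin L, ∏ j ∈ Finset.Ioi i, (lam i - lam j)) *
            (∏ i : Fin L, lam i ^ m) *
            ∏ i ∈ Finset.range m, (Nat.factorial i : ℝ)))) := by
  classical
  have hlaminj : Function.Injective lam := hanti.injective
  set Vlam : ℝ := ∏ i : Fin L, ∏ j ∈ Finset.Ioi i, (lam i - lam j) with hVlam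
  have hVlam0 : Vlam ≠ 0 := by
    rw [hVlam]
    refine Finset.prod_ne_zero_iff.mpr fun i _ => Finset.prod_ne_zero_iff.mpr fun j hj => ?_
    refine sub_ne_zero.mpr fun h => ?_
    have := hlaminj h
    rw [this] at hj
    exact absurd (Finset.mem_Ioi.mp hj) (lt_irrefl j)
  have hP0 : (∏ i : Fin L, lam i ^ m) ≠ 0 := by
    refine Finset.prod_ne_zero_iff.mpr fun i _ => ?_
    exact pow_ne_zero _ (ne_of_gt (hpos i))
  have hF0 : (∏ i ∈ Finset.range m, (Nat.factorial i : ℝ)) ≠ 0 := by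
    refine Finset.prod_ne_zero_iff.mpr fun i _ => ?_
    positivity
  -- denominator tendsto
  have hden : Filter.Tendsto
      (fun μ : Fin m → ℝ => Vlam * ∏ a : Fin L, ∏ b : Fin m, (lam a - μ b))
      (nhdsWithin 0 {μ : Fin m → ℝ | Function.Injective (Fin.append lam μ)})
      (nhds (Vlam * ∏ i : Fin L, lam i ^ m)) := by
    have hc : Continuous (fun μ : Fin m → ℝ => Vlam * ∏ a : Fin L, ∏ b : Fin m, (lam a - μ b)) :=
      continuous_const.mul (continuous_finset_prod _ fun a _ =>
        continuous_finset_prod _ fun b _ => continuous_const.sub (continuous_apply b))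
    have hval : Vlam * ∏ a : Fin L, ∏ b : Fin m, (lam a - (0 : Fin m → ℝ) b)
        = Vlam * ∏ i : Fin L, lam i ^ m := by
      congr 1
      refine Finset.prod_congr rfl fun a _ => ?_
      simp [Finset.prod_const]
    have := hc.tendsto (0 : Fin m → ℝ)
    rw [hval] at this
    exact this.mono_left nhdsWithin_le_nhds
  -- numerator tendsto
  have hnum := (Continuous.matrix_det continuous_id).continuousAt.tendsto.comp
    (BB_tendsto L m f hf lam)
  have hmain := hnum.div hden (by
    exact mul_ne_zero hVlam0 hP0)
  refine Filter.Tendsto.congr'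
    (eventuallyEq_nhdsWithin_of_eqOn fun μ hμ => (det_eq L m f lam μ hμ).symm) ?_
  convert hmain using 2
  · rfl
  rw [detM_eq L m f lam]
  rw [mul_comm Vlam (∏ i : Fin L, lam i ^ m)] -- maybe not needed; do field_simp
  simp only [id]
  field_simp
end

section
/- For fixed distinct φ_1, ..., φ_s > 0 and the functions f_i(λ) = ₀F₁(t-s+1; λ φ_i), the limit as λ_2, ..., λ_s → 0 of det[f_i(λ_j)] / ∏_{i<j}(λ_i - λ_j) (with λ_1 > 0 fixed) equals det[M] / (λ_1^{s-1} ∏_{i=1}^{s-1}(i-1)!), where M has first column ₀F₁(t-s+1; λ_1 φ_i) and j-th column (j ≥ 2) equal to φ_i^{s-j} (t-s)!/(t-j)!. -/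
open Filter Finset

namespace DRL

/-- Complete homogeneous symmetric polynomial `h_n` in the variables `v 0, ..., v (k-1)`. -/
noncomputable def hh : ℕ → ℕ → (ℕ → ℝ) → ℝ
  | 0, _, _ => 1
  | _+1, 0, _ => 0
  | n+1, k+1, v => hh (n+1) k v + v k * hh n (k+1) v
  termination_by n k => (n, k)

@[simp] lemma hh_zero (k : ℕ) (v : ℕ → ℝ) : hh 0 k v = 1 := by
  cases k <;> rw [hh]

@[simp] lemma hh_succ_zero (n : ℕ) (v : ℕ → ℝ) : hh (n+1) 0 v = 0 := by rw [hh]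

lemma hh_succ_succ (n k : ℕ) (v : ℕ → ℝ) :
    hh (n+1) (k+1) v = hh (n+1) k v + v k * hh n (k+1) v := by
  rw [hh]

lemma hh_congr : ∀ (n k : ℕ) (v w : ℕ → ℝ), (∀ l, l < k → v l = w l) → hh n k v = hh n k w
  | 0, k, v, w, _ => by simp
  | n+1, 0, v, w, _ => by simp
  | n+1, k+1, v, w, h => by
    rw [hh_succ_succ, hh_succ_succ, hh_congr (n+1) k v w (fun l hl => h l (by omega)),
      hh_congr n (k+1) v w h, h k (by omega)]
  termination_by n k => (n, k)

lemma hh_one (n : ℕ) (v : ℕ → ℝ) : hh n 1 v = v 0 ^ n := by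
  induction n with
  | zero => simp
  | succ n ih => rw [hh_succ_succ, ih]; simp [pow_succ]; ring

lemma hh_zeros : ∀ (n k : ℕ) (v : ℕ → ℝ), (∀ l, l < k → v l = 0) →
    hh n k v = if n = 0 then 1 else 0
  | 0, k, v, _ => by simp
  | n+1, 0, v, _ => by simp
  | n+1, k+1, v, h => by
    rw [hh_succ_succ, hh_zeros (n+1) k v (fun l hl => h l (by omega)), h k (by omega)]
    simp
  termination_by n k => (n, k)

lemma hh_zeros_last (n k : ℕ) (v : ℕ → ℝ) (h : ∀ l, l < k → v l = 0) :
    hh n (k+1) v = v k ^ n := by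
  induction n with
  | zero => simp
  | succ n ih =>
    rw [hh_succ_succ, ih, hh_zeros (n+1) k v h]
    simp [pow_succ]; ring

lemma hh_bound : ∀ (n k : ℕ) (v : ℕ → ℝ) (R : ℝ), 0 ≤ R → (∀ l, l < k → |v l| ≤ R) →
    |hh n k v| ≤ (Nat.choose (n + k) k : ℝ) * R ^ n
  | 0, k, v, R, hR, _ => by simp
  | n+1, 0, v, R, hR, _ => by
    simp only [hh_succ_zero, abs_zero]
    positivity
  | n+1, k+1, v, R, hR, h => by
    rw [hh_succ_succ]
    have b1 := hh_bound (n+1) k v R hR (fun l hl => h l (by omega))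
    have b2 := hh_bound n (k+1) v R hR h
    have hb2 : |v k * hh n (k+1) v| ≤ R * ((Nat.choose (n + (k+1)) (k+1) : ℝ) * R ^ n) := by
      rw [abs_mul]
      exact mul_le_mul (h k (by omega)) b2 (abs_nonneg _) hR
    calc |hh (n+1) k v + v k * hh n (k+1) v|
        ≤ |hh (n+1) k v| + |v k * hh n (k+1) v| := abs_add_le _ _
      _ ≤ (Nat.choose (n+1+k) k : ℝ) * R ^ (n+1)
            + R * ((Nat.choose (n + (k+1)) (k+1) : ℝ) * R ^ n) := add_le_add b1 hb2
      _ = ((Nat.choose (n+1+k) k : ℝ) + (Nat.choose (n+(k+1)) (k+1) : ℝ)) * R ^ (n+1) := by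
          ring
      _ = (Nat.choose (n+1+(k+1)) (k+1) : ℝ) * R ^ (n+1) := by
          congr 1
          rw [← Nat.cast_add]
          congr 1
          have e : n+1+(k+1) = (n+1+k) + 1 := by omega
          rw [e, Nat.choose_succ_succ' (n+1+k) k]
          congr 2
          omega
  termination_by n k => (n, k)

lemma hh_sub (k : ℕ) (v : ℕ → ℝ) (x y : ℝ) : ∀ (n : ℕ),
    hh (n+1) (k+1) (fun l => if l = k then x else v l)
      = hh (n+1) (k+1) (fun l => if l = k then y else v l)
        + (x - y) * hh n (k+2) (fun l => if l = k then y else if l = k+1 then x else v l) := by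
  have congr1 : ∀ nn, hh nn k (fun l => if l = k then x else v l)
      = hh nn k (fun l => if l = k then y else v l) := fun nn =>
    hh_congr _ _ _ _ (fun l hl => by simp [Nat.ne_of_lt hl])
  have congr2 : ∀ nn, hh nn (k+1) (fun l => if l = k then y else if l = k+1 then x else v l)
      = hh nn (k+1) (fun l => if l = k then y else v l) := fun nn =>
    hh_congr _ _ _ _ (fun l hl => by
      by_cases hk : l = k
      · simp [hk]
      · have h2 : l ≠ k + 1 := by omega
        simp [hk, h2])
  intro n
  induction n with
  | zero =>
    rw [hh_succ_succ, hh_succ_succ, congr1]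
    simp
  | succ n ih =>
    rw [hh_succ_succ (n+1) k, hh_succ_succ (n+1) k, congr1]
    have h2 : hh (n+1) (k+2) (fun l => if l = k then y else if l = k+1 then x else v l)
        = hh (n+1) (k+1) (fun l => if l = k then y else if l = k+1 then x else v l)
          + x * hh n (k+2) (fun l => if l = k then y else if l = k+1 then x else v l) := by
      rw [hh_succ_succ]
      congr 2
      simp
    rw [h2, congr2, ih]
    have hx : (if k = k then x else v k) = x := if_pos rfl
    have hy : (if k = k then y else v k) = y := if_pos rfl
    rw [hx, hy]
    ring

lemma hh_continuous {X : Type*} [TopologicalSpace X] (g : ℕ → X → ℝ)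
    (hg : ∀ l, Continuous (g l)) :
    ∀ (n k : ℕ), Continuous (fun x => hh n k (fun l => g l x))
  | 0, k => by simpa using continuous_const
  | n+1, 0 => by simpa using continuous_const
  | n+1, k+1 => by
    have h1 := hh_continuous g hg (n+1) k
    have h2 := hh_continuous g hg n (k+1)
    simp only [hh_succ_succ]; exact h1.add ((hg k).mul h2)
  termination_by n k => (n, k)

/-- Newton interpolation identity for monomials. -/
lemma newton (v : ℕ → ℝ) (x : ℝ) (p : ℕ) : ∀ (j : ℕ),
    x ^ p = (∑ k ∈ range j, (if k ≤ p then hh (p-k) (k+1) v else 0) * ∏ l ∈ range k, (x - v l))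
      + (∏ l ∈ range j, (x - v l)) *
          (if j ≤ p then hh (p-j) (j+1) (fun l => if l = j then x else v l) else 0) := by
  intro j
  induction j with
  | zero =>
    simp only [range_zero, sum_empty, prod_empty, zero_add, one_mul, Nat.zero_le, if_pos]
    rw [hh_one]
    simp
  | succ j ih =>
    rw [sum_range_succ, prod_range_succ]
    have key : (if j ≤ p then hh (p-j) (j+1) (fun l => if l = j then x else v l) else 0)
        = (if j ≤ p then hh (p-j) (j+1) v else 0)
          + (x - v j) *
            (if j+1 ≤ p then hh (p-(j+1)) (j+1+1) (fun l => if l = j+1 then x else v l) else 0) := by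
      simp only [show j+1+1 = j+2 from rfl]
      rcases Nat.lt_or_ge p j with hpj | hpj
      · rw [if_neg (by omega), if_neg (by omega), if_neg (by omega)]
        ring
      · rcases Nat.eq_or_lt_of_le hpj with hpe | hlt
        · rw [if_pos (by omega), if_pos (by omega), if_neg (by omega), ← hpe]
          simp [Nat.sub_self]
        · rw [if_pos (by omega), if_pos (by omega), if_pos (by omega)]
          have hpj1 : p - j = (p - (j+1)) + 1 := by omega
          rw [hpj1, hh_sub j v x (v j) (p - (j+1))]
          have c1 : hh (p-(j+1)+1) (j+1) (fun l => if l = j then v j else v l)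
              = hh (p-(j+1)+1) (j+1) v :=
            hh_congr _ _ _ _ (fun l hl => by by_cases h : l = j <;> simp [h])
          have c2 : hh (p-(j+1)) (j+2) (fun l => if l = j then v j else if l = j+1 then x else v l)
              = hh (p-(j+1)) (j+2) (fun l => if l = j+1 then x else v l) :=
            hh_congr _ _ _ _ (fun l hl => by
              by_cases h : l = j
              · subst h
                simp
              · simp [h])
          rw [c1, c2]
    rw [key] at ih
    rw [ih]
    ring

/-! ### Coefficients -/

noncomputable def coefA (b : ℝ) (c : ℝ) (p : ℕ) : ℝ :=
  c ^ p / ((ascPochhammer ℝ p).eval b * (Nat.factorial p : ℝ))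

lemma poch_eval (d q : ℕ) :
    (ascPochhammer ℝ q).eval ((d:ℝ)+1) = ((d+q).factorial : ℝ) / (d.factorial : ℝ) := by
  have h := factorial_mul_ascPochhammer ℝ d q
  have hd : (0:ℝ) < (d.factorial : ℝ) := by exact_mod_cast Nat.factorial_pos d
  rw [eq_div_iff (ne_of_gt hd), mul_comm]
  exact_mod_cast h

lemma poch_ge_one (d q : ℕ) : 1 ≤ (ascPochhammer ℝ q).eval ((d:ℝ)+1) := by
  rw [poch_eval, le_div_iff₀ (by positivity), one_mul]
  exact_mod_cast Nat.factorial_le (Nat.le_add_right d q)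

lemma poch_pos (d q : ℕ) : 0 < (ascPochhammer ℝ q).eval ((d:ℝ)+1) :=
  lt_of_lt_of_le one_pos (poch_ge_one d q)

lemma coefA_abs_le (d : ℕ) (c : ℝ) (p k : ℕ) :
    |coefA ((d:ℝ)+1) c (p+k)| ≤ |c|^(p+k) / (Nat.factorial p : ℝ) := by
  have hE := poch_pos d (p+k)
  have hF : (0:ℝ) < ((p+k).factorial : ℝ) := by exact_mod_cast Nat.factorial_pos _
  have hden : (0:ℝ) < (ascPochhammer ℝ (p+k)).eval ((d:ℝ)+1) * ((p+k).factorial : ℝ) :=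
    mul_pos hE hF
  rw [coefA, abs_div, abs_pow, abs_of_pos hden]
  apply div_le_div_of_nonneg_left (by positivity) (by positivity)
  calc (p.factorial : ℝ) ≤ ((p+k).factorial : ℝ) := by
        exact_mod_cast Nat.factorial_le (Nat.le_add_right p k)
    _ ≤ _ := le_mul_of_one_le_left (le_of_lt hF) (poch_ge_one d (p+k))

lemma choose_le_two_pow (n k : ℕ) : Nat.choose n k ≤ 2^n := by
  rcases le_or_gt k n with h | h
  · calc Nat.choose n k ≤ ∑ i ∈ range (n+1), Nat.choose n i :=
        Finset.single_le_sum (fun i _ => Nat.zero_le _) (mem_range.2 (by omega))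
      _ = 2^n := Nat.sum_range_choose n
  · simp [Nat.choose_eq_zero_of_lt h]

/-- Pointwise bound on the terms of the divided-difference series. -/
lemma term_bound (d : ℕ) (c : ℝ) (k : ℕ) (v : ℕ → ℝ) (R : ℝ) (hR : 0 ≤ R)
    (hv : ∀ l, |v l| ≤ R) (p : ℕ) :
    ‖coefA ((d:ℝ)+1) c (p+k) * hh p (k+1) v‖
      ≤ (|c|^k * 2^(k+1)) * ((2*R*|c|)^p / (p.factorial : ℝ)) := by
  rw [Real.norm_eq_abs, abs_mul]
  calc |coefA ((d:ℝ)+1) c (p+k)| * |hh p (k+1) v|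
        ≤ (|c|^(p+k) / (p.factorial : ℝ))
            * ((Nat.choose (p+(k+1)) (k+1) : ℝ) * R^p) := by
          apply mul_le_mul (coefA_abs_le d c p k) (hh_bound p (k+1) v R hR (fun l _ => hv l))
            (abs_nonneg _) (by positivity)
      _ ≤ (|c|^(p+k) / (p.factorial : ℝ)) * ((2:ℝ)^(p+(k+1)) * R^p) := by
          apply mul_le_mul_of_nonneg_left _ (by positivity)
          apply mul_le_mul_of_nonneg_right _ (by positivity)
          exact_mod_cast choose_le_two_pow (p+(k+1)) (k+1)
      _ = (|c|^k * 2^(k+1)) * ((2*R*|c|)^p / (p.factorial : ℝ)) := by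
          rw [pow_add, pow_add, mul_pow, mul_pow]
          field_simp

/-- Master summability bound. -/
lemma summable_col (d : ℕ) (c : ℝ) (k : ℕ) (v : ℕ → ℝ) (R : ℝ) (hR : 0 ≤ R)
    (hv : ∀ l, |v l| ≤ R) :
    Summable (fun p => coefA ((d:ℝ)+1) c (p+k) * hh p (k+1) v) := by
  apply Summable.of_norm_bounded
    (g := fun p => (|c|^k * 2^(k+1)) * ((2*R*|c|)^p / (p.factorial : ℝ)))
  · exact ((Real.summable_pow_div_factorial (2*R*|c|)).mul_left _)
  · exact term_bound d c k v R hR hv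

/-! ### The divided-difference column functions -/

noncomputable def Dfun (d : ℕ) (c : ℝ) (v : ℕ → ℝ) (k : ℕ) : ℝ :=
  ∑' p, coefA ((d:ℝ)+1) c (p+k) * hh p (k+1) v

lemma hyp0F1_eq_tsum (d : ℕ) (c x : ℝ) :
    hyp0F1 ((d:ℝ)+1) (x*c) = ∑' p, coefA ((d:ℝ)+1) c p * x^p := by
  unfold hyp0F1 coefA
  exact tsum_congr fun p => by rw [mul_pow]; ring

lemma summable_gk (d : ℕ) (c : ℝ) (v : ℕ → ℝ) (R : ℝ) (hR : 0 ≤ R)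
    (hv : ∀ l, |v l| ≤ R) (k : ℕ) :
    Summable (fun p => coefA ((d:ℝ)+1) c p * (if k ≤ p then hh (p-k) (k+1) v else 0)) := by
  rw [← summable_nat_add_iff k]
  apply (summable_col d c k v R hR hv).congr
  intro q
  rw [if_pos (Nat.le_add_left k q), Nat.add_sub_cancel]

lemma tsum_gk (d : ℕ) (c : ℝ) (v : ℕ → ℝ) (R : ℝ) (hR : 0 ≤ R)
    (hv : ∀ l, |v l| ≤ R) (k : ℕ) :
    ∑' p, coefA ((d:ℝ)+1) c p * (if k ≤ p then hh (p-k) (k+1) v else 0) = Dfun d c v k := by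
  rw [← Summable.sum_add_tsum_nat_add k (summable_gk d c v R hR hv k)]
  have h1 : ∑ p ∈ range k, coefA ((d:ℝ)+1) c p * (if k ≤ p then hh (p-k) (k+1) v else 0) = 0 := by
    apply Finset.sum_eq_zero
    intro p hp
    rw [if_neg (by simpa using mem_range.1 hp), mul_zero]
  rw [h1, zero_add, Dfun]
  exact tsum_congr fun q => by rw [if_pos (Nat.le_add_left k q), Nat.add_sub_cancel]

/-- Newton expansion of the entire function at a node. -/
lemma newton_sum (d : ℕ) (c : ℝ) (v : ℕ → ℝ) (R : ℝ) (hR : 0 ≤ R)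
    (hv : ∀ l, |v l| ≤ R) (s : ℕ) (x : ℝ) (j0 : ℕ) (hj0 : j0 < s) (hx : x = v j0) :
    hyp0F1 ((d:ℝ)+1) (x*c)
      = ∑ k ∈ range s, Dfun d c v k * ∏ l ∈ range k, (x - v l) := by
  rw [hyp0F1_eq_tsum]
  have hrem : (∏ l ∈ range s, (x - v l)) = 0 :=
    Finset.prod_eq_zero (mem_range.2 hj0) (by rw [hx, sub_self])
  have hpt : ∀ p, coefA ((d:ℝ)+1) c p * x^p
      = ∑ k ∈ range s, coefA ((d:ℝ)+1) c p * (if k ≤ p then hh (p-k) (k+1) v else 0)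
          * ∏ l ∈ range k, (x - v l) := by
    intro p
    conv_lhs => rw [newton v x p s]
    rw [hrem, zero_mul, add_zero, Finset.mul_sum]
    exact Finset.sum_congr rfl fun k _ => by ring
  calc ∑' p, coefA ((d:ℝ)+1) c p * x^p
      = ∑' p, ∑ k ∈ range s, coefA ((d:ℝ)+1) c p * (if k ≤ p then hh (p-k) (k+1) v else 0)
          * ∏ l ∈ range k, (x - v l) := tsum_congr hpt
    _ = ∑ k ∈ range s, ∑' p, coefA ((d:ℝ)+1) c p * (if k ≤ p then hh (p-k) (k+1) v else 0)
          * ∏ l ∈ range k, (x - v l) :=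
        Summable.tsum_finsetSum (fun k _ => (summable_gk d c v R hR hv k).mul_right _)
    _ = ∑ k ∈ range s, Dfun d c v k * ∏ l ∈ range k, (x - v l) := by
        refine Finset.sum_congr rfl fun k _ => ?_
        rw [tsum_mul_right, tsum_gk d c v R hR hv k]

/-! ### Matrices -/

noncomputable def nodes (m : ℕ) (lam1 : ℝ) (μ : Fin m → ℝ) : ℕ → ℝ :=
  fun l => if h : l < m then μ ⟨l, h⟩ else lam1

lemma nodes_bound (m : ℕ) (lam1 : ℝ) (μ : Fin m → ℝ) :
    ∀ l, |nodes m lam1 μ l| ≤ |lam1| + ∑ j, |μ j| := by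
  intro l
  unfold nodes
  split
  · next h =>
    calc |μ ⟨l,h⟩| ≤ ∑ j, |μ j| :=
          Finset.single_le_sum (f := fun j => |μ j|) (fun j _ => abs_nonneg _) (mem_univ _)
      _ ≤ _ := le_add_of_nonneg_left (abs_nonneg _)
  · exact le_add_of_nonneg_right (Finset.sum_nonneg fun j _ => abs_nonneg _)

lemma nodes_R_nonneg (m : ℕ) (lam1 : ℝ) (μ : Fin m → ℝ) : 0 ≤ |lam1| + ∑ j, |μ j| :=
  add_nonneg (abs_nonneg _) (Finset.sum_nonneg fun j _ => abs_nonneg _)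

noncomputable def Dmat (d m : ℕ) (lam1 : ℝ) (φ : Fin (1+m) → ℝ) (μ : Fin m → ℝ) :
    Matrix (Fin (1+m)) (Fin (1+m)) ℝ :=
  Matrix.of fun i k => Dfun d (φ i) (nodes m lam1 μ) k.val

noncomputable def Nmat (m : ℕ) (lam1 : ℝ) (μ : Fin m → ℝ) :
    Matrix (Fin (1+m)) (Fin (1+m)) ℝ :=
  Matrix.of fun k j =>
    ∏ l ∈ range k.val, (nodes m lam1 μ j.val - nodes m lam1 μ l)

lemma Fmat_eq (d m : ℕ) (lam1 : ℝ) (φ : Fin (1+m) → ℝ) (μ : Fin m → ℝ) :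
    (Matrix.of fun i j : Fin (1+m) => hyp0F1 ((d:ℝ)+1) (nodes m lam1 μ j.val * φ i))
      = Dmat d m lam1 φ μ * Nmat m lam1 μ := by
  ext i j
  rw [Matrix.mul_apply]
  simp only [Matrix.of_apply, Dmat, Nmat]
  rw [newton_sum d (φ i) (nodes m lam1 μ) (|lam1| + ∑ j, |μ j|) (nodes_R_nonneg m lam1 μ)
      (nodes_bound m lam1 μ) (1+m) (nodes m lam1 μ j.val) j.val j.isLt rfl]
  rw [← Fin.sum_univ_eq_sum_range
      (fun k => Dfun d (φ i) (nodes m lam1 μ) k * ∏ l ∈ range k, (nodes m lam1 μ j.val - nodes m lam1 μ l)) (1+m)]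

lemma prod_Iio_val {n : ℕ} (j : Fin n) (g : ℕ → ℝ) :
    ∏ i ∈ Iio j, g i.val = ∏ l ∈ range j.val, g l := by
  rw [← Nat.Iio_eq_range, ← Fin.map_valEmbedding_Iio, Finset.prod_map]
  rfl

lemma det_Nmat (m : ℕ) (lam1 : ℝ) (μ : Fin m → ℝ) :
    (Nmat m lam1 μ).det
      = (Matrix.vandermonde (fun j : Fin (1+m) => nodes m lam1 μ j.val)).det := by
  have htri : (Nmat m lam1 μ).BlockTriangular id := by
    intro k j h
    simp only [id] at h
    exact Finset.prod_eq_zero (mem_range.2 h) (sub_self _)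
  rw [Matrix.det_of_upperTriangular htri, Matrix.det_vandermonde]
  have h1 : ∀ k : Fin (1+m), (Nmat m lam1 μ) k k
      = ∏ i ∈ Iio k, (nodes m lam1 μ k.val - nodes m lam1 μ i.val) := by
    intro k
    rw [prod_Iio_val k (fun l => nodes m lam1 μ k.val - nodes m lam1 μ l)]
    rfl
  simp only [h1]
  rw [Finset.prod_comm' (t' := univ) (s' := fun i => Ioi i)]
  intro k i
  simp only [mem_univ, mem_Iio, mem_Ioi, true_and, and_true]

/-! ### Limits of the divided-difference entries -/

lemma nodes_continuous (m : ℕ) (lam1 : ℝ) (l : ℕ) :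
    Continuous (fun μ : Fin m → ℝ => nodes m lam1 μ l) := by
  unfold nodes
  rcases lt_or_ge l m with h | h
  · simpa only [dif_pos h] using continuous_apply (⟨l, h⟩ : Fin m)
  · simpa only [dif_neg (not_lt.2 h)] using continuous_const

lemma eventually_nodes_bound (m : ℕ) (lam1 : ℝ) :
    ∀ᶠ μ : Fin m → ℝ in nhds 0, ∀ l, |nodes m lam1 μ l| ≤ |lam1| + 1 := by
  have h1 : ∀ᶠ μ : Fin m → ℝ in nhds 0, ∀ j : Fin m, |μ j| ≤ 1 := by
    rw [Filter.eventually_all]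
    intro j
    have h2 : ∀ᶠ y : ℝ in nhds 0, |y| ≤ 1 := by
      filter_upwards [Metric.ball_mem_nhds (0:ℝ) one_pos] with y hy
      rw [Metric.mem_ball, Real.dist_eq, sub_zero] at hy
      exact hy.le
    have h3 : Tendsto (fun μ : Fin m → ℝ => μ j) (nhds 0) (nhds 0) := by
      simpa using (continuous_apply j).tendsto (0 : Fin m → ℝ)
    exact h3.eventually h2
  filter_upwards [h1] with μ hμ l
  unfold nodes
  split
  · next h => calc |μ ⟨l, h⟩| ≤ 1 := hμ _
      _ ≤ |lam1| + 1 := by linarith [abs_nonneg lam1]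
  · linarith [abs_nonneg lam1]

lemma tendsto_Dfun (d m : ℕ) (c lam1 : ℝ) (k : ℕ) :
    Tendsto (fun μ : Fin m → ℝ => Dfun d c (nodes m lam1 μ) k) (nhds 0)
      (nhds (Dfun d c (nodes m lam1 0) k)) := by
  unfold Dfun
  apply tendsto_tsum_of_dominated_convergence
    (bound := fun p => (|c|^k * 2^(k+1)) * ((2*(|lam1|+1)*|c|)^p / (p.factorial : ℝ)))
  · exact ((Real.summable_pow_div_factorial (2*(|lam1|+1)*|c|)).mul_left _)
  · intro p
    apply Tendsto.const_mul
    have hc := hh_continuous (fun l (μ : Fin m → ℝ) => nodes m lam1 μ l)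
      (fun l => nodes_continuous m lam1 l) p (k+1)
    exact hc.tendsto (0 : Fin m → ℝ)
  · filter_upwards [eventually_nodes_bound m lam1] with μ hμ p
    exact term_bound d c k _ (|lam1|+1) (by positivity) hμ p

lemma nodes_zero_lt (m : ℕ) (lam1 : ℝ) {l : ℕ} (h : l < m) :
    nodes m lam1 (0 : Fin m → ℝ) l = 0 := by
  simp [nodes, h]

lemma nodes_zero_ge (m : ℕ) (lam1 : ℝ) {l : ℕ} (h : ¬ l < m) :
    nodes m lam1 (0 : Fin m → ℝ) l = lam1 := by
  simp [nodes, h]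

lemma Dfun_zero_of_lt (d m : ℕ) (c lam1 : ℝ) {k : ℕ} (hk : k < m) :
    Dfun d c (nodes m lam1 0) k = coefA ((d:ℝ)+1) c k := by
  unfold Dfun
  have hz : ∀ p, hh p (k+1) (nodes m lam1 0) = if p = 0 then 1 else 0 := fun p =>
    hh_zeros p (k+1) _ (fun l hl => nodes_zero_lt m lam1 (by omega))
  rw [tsum_eq_single 0 (fun p hp => by rw [hz p, if_neg hp, mul_zero])]
  rw [hz 0, if_pos rfl, mul_one, Nat.zero_add]

lemma Dfun_zero_last (d m : ℕ) (c lam1 : ℝ) :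
    Dfun d c (nodes m lam1 0) m = ∑' p, coefA ((d:ℝ)+1) c (p+m) * lam1^p := by
  unfold Dfun
  refine tsum_congr fun p => ?_
  rw [hh_zeros_last p m _ (fun l hl => nodes_zero_lt m lam1 hl),
    nodes_zero_ge m lam1 (lt_irrefl m)]

/-! ### The elementary column matrix -/

noncomputable def Emat (m : ℕ) (lam1 : ℝ) : Matrix (Fin (1+m)) (Fin (1+m)) ℝ :=
  Matrix.of fun k j => if (j:ℕ) = m then lam1^(k:ℕ) else if k = j then 1 else 0

lemma det_Emat (m : ℕ) (lam1 : ℝ) : (Emat m lam1).det = lam1^m := by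
  have htri : (Emat m lam1).BlockTriangular id := by
    intro k j h
    simp only [id] at h
    have hj : (j:ℕ) ≠ m := by
      have := k.isLt
      have : (j:ℕ) < (k:ℕ) := h
      omega
    have hkj : ¬ (k = j) := by
      intro he
      exact absurd (congrArg Fin.val he) (by omega : ¬ ((k:ℕ) = (j:ℕ)))
    simp only [Emat, Matrix.of_apply, if_neg hj, if_neg hkj]
  rw [Matrix.det_of_upperTriangular htri]
  have hdiag : ∀ k : Fin (1+m), (Emat m lam1) k k = if (k:ℕ) = m then lam1^m else 1 := by
    intro k
    simp only [Emat, Matrix.of_apply, if_pos rfl]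
    by_cases h : (k:ℕ) = m
    · rw [if_pos h, if_pos h, h]
    · rw [if_neg h, if_neg h]
      simp
  simp only [hdiag]
  rw [Finset.prod_eq_single (⟨m, by omega⟩ : Fin (1+m))]
  · rw [if_pos rfl]
  · intro k _ hk
    rw [if_neg (fun h => hk (Fin.ext h))]
  · intro h
    exact absurd (mem_univ _) h

lemma summable_coef_pow (d : ℕ) (c x : ℝ) :
    Summable (fun p => coefA ((d:ℝ)+1) c p * x^p) := by
  apply (summable_col d c 0 (fun _ => x) |x| (abs_nonneg x) (fun l => le_refl _)).congr
  intro p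
  rw [Nat.add_zero, hh_one]

lemma Dprime_apply_last (d m : ℕ) (lam1 : ℝ) (φ : Fin (1+m) → ℝ) (i : Fin (1+m)) :
    (Dmat d m lam1 φ 0 * Emat m lam1) i ⟨m, by omega⟩ = hyp0F1 ((d:ℝ)+1) (lam1 * φ i) := by
  rw [Matrix.mul_apply]
  have h1 : ∀ k : Fin (1+m), Dmat d m lam1 φ 0 i k * Emat m lam1 k ⟨m, by omega⟩
      = Dfun d (φ i) (nodes m lam1 0) (k:ℕ) * lam1^(k:ℕ) := by
    intro k
    simp only [Dmat, Emat, Matrix.of_apply]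
    simp
  simp only [h1]
  rw [Fin.sum_univ_eq_sum_range (fun k => Dfun d (φ i) (nodes m lam1 0) k * lam1^k) (1+m)]
  rw [show (1+m) = m+1 from Nat.add_comm 1 m, Finset.sum_range_succ]
  have h2 : ∑ k ∈ range m, Dfun d (φ i) (nodes m lam1 0) k * lam1^k
      = ∑ k ∈ range m, coefA ((d:ℝ)+1) (φ i) k * lam1^k := by
    refine Finset.sum_congr rfl fun k hk => ?_
    rw [Dfun_zero_of_lt d m (φ i) lam1 (mem_range.1 hk)]
  have h3 : Dfun d (φ i) (nodes m lam1 0) m * lam1^m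
      = ∑' p, coefA ((d:ℝ)+1) (φ i) (p+m) * lam1^(p+m) := by
    rw [Dfun_zero_last, ← tsum_mul_right]
    exact tsum_congr fun p => by rw [pow_add]; ring
  rw [h2, h3, Summable.sum_add_tsum_nat_add m (summable_coef_pow d (φ i) lam1),
    ← hyp0F1_eq_tsum d (φ i) lam1]

lemma Dprime_apply_ne (d m : ℕ) (lam1 : ℝ) (φ : Fin (1+m) → ℝ) (i j : Fin (1+m))
    (hj : (j:ℕ) ≠ m) :
    (Dmat d m lam1 φ 0 * Emat m lam1) i j = Dmat d m lam1 φ 0 i j := by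
  rw [Matrix.mul_apply]
  rw [Finset.sum_eq_single j]
  · simp only [Emat, Matrix.of_apply, if_neg hj]
    simp
  · intro k _ hk
    simp only [Emat, Matrix.of_apply, if_neg hj, if_neg hk, mul_zero]
  · intro h
    exact absurd (mem_univ _) h

/-! ### Sign bookkeeping -/

lemma prod_Ioi_neg (n : ℕ) (f : Fin n → Fin n → ℝ) :
    (∏ i : Fin n, ∏ j ∈ Ioi i, (-(f i j)))
      = (-1)^(∑ i : Fin n, (Ioi i).card) * ∏ i : Fin n, ∏ j ∈ Ioi i, f i j := by
  rw [← Finset.prod_pow_eq_pow_sum, ← Finset.prod_mul_distrib]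
  refine Finset.prod_congr rfl fun i _ => ?_
  rw [← Finset.prod_const, ← Finset.prod_mul_distrib]
  exact Finset.prod_congr rfl fun j _ => (neg_one_mul _).symm

lemma denom_eq_vandermonde (n : ℕ) (lamf : Fin n → ℝ) :
    (∏ i : Fin n, ∏ j ∈ Ioi i, (lamf i - lamf j))
      = (-1)^(∑ i : Fin n, (Ioi i).card) * (Matrix.vandermonde lamf).det := by
  rw [Matrix.det_vandermonde, ← prod_Ioi_neg]
  exact Finset.prod_congr rfl fun i _ => Finset.prod_congr rfl fun j _ => (neg_sub _ _).symm

lemma sign_revPerm_eq (n : ℕ) :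
    ((Equiv.Perm.sign (Fin.revPerm : Equiv.Perm (Fin n)) : ℤ) : ℝ)
      = (-1)^(∑ i : Fin n, (Ioi i).card) := by
  set u : Fin n → ℝ := fun i => (i.val : ℝ) with hu
  have h2 : (Matrix.vandermonde u).submatrix (Fin.revPerm : Equiv.Perm (Fin n)) id
      = Matrix.vandermonde (fun i => u (Fin.rev i)) := by
    ext i j
    rfl
  have h1 := Matrix.det_permute (Fin.revPerm : Equiv.Perm (Fin n)) (Matrix.vandermonde u)
  rw [h2, Matrix.det_vandermonde, Matrix.det_vandermonde] at h1
  have h4 : (∏ i : Fin n, ∏ j ∈ Ioi i, (u (Fin.rev j) - u (Fin.rev i)))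
      = (-1)^(∑ i : Fin n, (Ioi i).card) * ∏ i : Fin n, ∏ j ∈ Ioi i, (u j - u i) := by
    rw [← prod_Ioi_neg]
    refine Finset.prod_congr rfl fun i _ => Finset.prod_congr rfl fun j hj => ?_
    have hij : (i:ℕ) < (j:ℕ) := Fin.lt_iff_val_lt_val.1 (mem_Ioi.1 hj)
    have hrj : (Fin.rev j : ℕ) = n - ((j:ℕ)+1) := Fin.val_rev j
    have hri : (Fin.rev i : ℕ) = n - ((i:ℕ)+1) := Fin.val_rev i
    have hjn : (j:ℕ)+1 ≤ n := j.isLt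
    have hin : (i:ℕ)+1 ≤ n := i.isLt
    simp only [hu]
    rw [hrj, hri, Nat.cast_sub hjn, Nat.cast_sub hin]
    push_cast
    ring
  have h5 : (∏ i : Fin n, ∏ j ∈ Ioi i, (u j - u i)) ≠ 0 := by
    apply Finset.prod_ne_zero_iff.2
    intro i _
    apply Finset.prod_ne_zero_iff.2
    intro j hj
    have hij : (i:ℕ) < (j:ℕ) := Fin.lt_iff_val_lt_val.1 (mem_Ioi.1 hj)
    have : (i:ℝ) < (j:ℝ) := by exact_mod_cast hij
    simp only [hu]
    intro hc
    rw [sub_eq_zero] at hc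
    exact absurd hc (ne_of_gt this)
  rw [h4] at h1
  exact (mul_right_cancel₀ h5 h1).symm

/-! ### The rotation permutation -/

def rot (m : ℕ) : Equiv.Perm (Fin (1+m)) where
  toFun := fun j => if h : (j:ℕ) < m then ⟨(j:ℕ)+1, by omega⟩ else ⟨0, by omega⟩
  invFun := fun j => if h : (j:ℕ) = 0 then ⟨m, by omega⟩ else ⟨(j:ℕ)-1, by omega⟩
  left_inv := by
    intro j
    dsimp only
    by_cases h : (j:ℕ) < m
    · rw [dif_pos h, dif_neg (by simp : ¬((⟨(j:ℕ)+1, by omega⟩ : Fin (1+m)):ℕ) = 0)]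
      exact Fin.ext (by simp)
    · have hj : (j:ℕ) = m := by have := j.isLt; omega
      rw [dif_neg h, dif_pos (by simp : ((⟨0, by omega⟩ : Fin (1+m)):ℕ) = 0)]
      exact Fin.ext (by simp [hj])
  right_inv := by
    intro j
    dsimp only
    by_cases h : (j:ℕ) = 0
    · rw [dif_pos h, dif_neg (by simp : ¬(m:ℕ) < m)]
      exact Fin.ext (by simp [h])
    · rw [dif_neg h]
      have hlt : (j:ℕ) - 1 < m := by have := j.isLt; omega
      rw [dif_pos (by simpa using hlt)]
      exact Fin.ext (by simp; omega)

lemma append_apply (m : ℕ) (lam1 : ℝ) (μ : Fin m → ℝ) (j : Fin (1+m)) :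
    Fin.append (fun _ : Fin 1 => lam1) μ j
      = if h : (j:ℕ) = 0 then lam1 else μ ⟨(j:ℕ)-1, by omega⟩ := by
  induction j using Fin.addCases with
  | left i =>
    rw [Fin.append_left]
    have hi : ((Fin.castAdd m i : Fin (1+m)):ℕ) = (i:ℕ) := rfl
    have h0 : (i:ℕ) = 0 := by omega
    rw [dif_pos (by rw [hi, h0])]
  | right i =>
    rw [Fin.append_right]
    have hi : ((Fin.natAdd 1 i : Fin (1+m)):ℕ) = 1 + (i:ℕ) := rfl
    rw [dif_neg (by omega)]
    congr 1
    exact Fin.ext (by simp [hi])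

lemma nodes_eq_append_rot (m : ℕ) (lam1 : ℝ) (μ : Fin m → ℝ) (j : Fin (1+m)) :
    nodes m lam1 μ (j:ℕ) = Fin.append (fun _ : Fin 1 => lam1) μ (rot m j) := by
  rw [append_apply]
  by_cases h : (j:ℕ) < m
  · have h1 : ((rot m j : Fin (1+m)):ℕ) = (j:ℕ)+1 := by simp [rot, Equiv.coe_fn_mk, dif_pos h]
    rw [dif_neg (by omega), nodes, dif_pos h]
    congr 1
    exact Fin.ext (by simp [h1])
  · have h1 : ((rot m j : Fin (1+m)):ℕ) = 0 := by simp [rot, Equiv.coe_fn_mk, dif_neg h]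
    rw [dif_pos h1, nodes, dif_neg h]

/-! ### Eventual equality on the injectivity set -/

lemma step_A (m : ℕ) (d : ℕ) (lam1 : ℝ) (φ : Fin (1+m) → ℝ) (μ : Fin m → ℝ)
    (hμ : Function.Injective (Fin.append (fun _ : Fin 1 => lam1) μ)) :
    (Matrix.det (Matrix.of fun i j : Fin (1+m) =>
        hyp0F1 ((d:ℝ)+1) (Fin.append (fun _ : Fin 1 => lam1) μ j * φ i)) /
      ∏ i : Fin (1+m), ∏ j ∈ Finset.Ioi i,
        (Fin.append (fun _ : Fin 1 => lam1) μ i - Fin.append (fun _ : Fin 1 => lam1) μ j))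
    = (-1)^(∑ i : Fin (1+m), (Ioi i).card) * (Dmat d m lam1 φ μ).det := by
  set lamf := Fin.append (fun _ : Fin 1 => lam1) μ with hlamf
  set c := ∑ i : Fin (1+m), (Ioi i).card with hc
  set sgn : ℝ := ((Equiv.Perm.sign (rot m) : ℤ) : ℝ) with hsgn_def
  have hsgn : sgn * sgn = 1 := by
    rcases Int.units_eq_one_or (Equiv.Perm.sign (rot m)) with h | h <;> simp [hsgn_def, h]
  have hm1 : ((-1:ℝ))^c * ((-1:ℝ))^c = 1 := by
    rw [← pow_add]
    exact Even.neg_one_pow ⟨c, rfl⟩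
  set F0 : Matrix (Fin (1+m)) (Fin (1+m)) ℝ :=
    Matrix.of (fun i j : Fin (1+m) => hyp0F1 ((d:ℝ)+1) (lamf j * φ i)) with hF0
  set Fm : Matrix (Fin (1+m)) (Fin (1+m)) ℝ :=
    Matrix.of (fun i j : Fin (1+m) => hyp0F1 ((d:ℝ)+1) (nodes m lam1 μ (j:ℕ) * φ i)) with hFm
  set V : ℝ := (Matrix.vandermonde lamf).det with hV_def
  -- F0 and Fm related by column permutation
  have hsub : F0.submatrix id (rot m) = Fm := by
    ext i j
    simp only [Matrix.submatrix_apply, hF0, hFm, Matrix.of_apply, id]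
    rw [nodes_eq_append_rot]
  have hdet1 : Fm.det = sgn * F0.det := by
    rw [← hsub, Matrix.det_permute' (rot m) F0]
  -- vandermonde relation
  have hvsub : (Matrix.vandermonde lamf).submatrix (⇑(rot m)) id
      = Matrix.vandermonde (fun j : Fin (1+m) => nodes m lam1 μ (j:ℕ)) := by
    ext i j
    simp only [Matrix.submatrix_apply, Matrix.vandermonde_apply, id]
    rw [nodes_eq_append_rot]
  have hdet2 : (Matrix.vandermonde (fun j : Fin (1+m) => nodes m lam1 μ (j:ℕ))).det
      = sgn * V := by
    rw [← hvsub, Matrix.det_permute (rot m) _]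
  -- nonvanishing
  have hVne : V ≠ 0 := by
    rw [hV_def, Matrix.det_vandermonde]
    apply Finset.prod_ne_zero_iff.2
    intro i _
    apply Finset.prod_ne_zero_iff.2
    intro j hj
    have hij : i ≠ j := ne_of_lt (mem_Ioi.1 hj)
    exact sub_ne_zero.2 fun h => hij (hμ h.symm)
  -- denominator
  have hdenom : (∏ i : Fin (1+m), ∏ j ∈ Finset.Ioi i, (lamf i - lamf j))
      = (-1)^c * V := denom_eq_vandermonde (1+m) lamf
  -- main factorization
  have hfact : F0.det = ((-1)^c * (Dmat d m lam1 φ μ).det) * ((-1)^c * V) := by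
    have h3 : Fm.det = (Dmat d m lam1 φ μ).det * (sgn * V) := by
      rw [hFm, Fmat_eq d m lam1 φ μ, Matrix.det_mul, det_Nmat, hdet2]
    have h4 : sgn * Fm.det = F0.det := by
      rw [hdet1, ← mul_assoc, hsgn, one_mul]
    calc F0.det = sgn * Fm.det := h4.symm
      _ = sgn * ((Dmat d m lam1 φ μ).det * (sgn * V)) := by rw [h3]
      _ = (sgn * sgn) * ((Dmat d m lam1 φ μ).det * V) := by ring
      _ = (Dmat d m lam1 φ μ).det * V := by rw [hsgn, one_mul]
      _ = ((-1)^c * ((-1)^c)) * ((Dmat d m lam1 φ μ).det * V) := by rw [hm1, one_mul]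
      _ = ((-1)^c * (Dmat d m lam1 φ μ).det) * ((-1)^c * V) := by ring
  rw [hdenom, hfact]
  rw [mul_div_assoc]
  rw [div_self (by
    intro h
    rcases mul_eq_zero.1 h with h' | h'
    · exact absurd h' (pow_ne_zero _ (by norm_num))
    · exact hVne h'), mul_one]

/-! ### The limiting value -/

lemma step_C (m t : ℕ) (ht : 1 + m ≤ t) (lam1 : ℝ) (hlam1 : lam1 ≠ 0) (φ : Fin (1+m) → ℝ) :
    Matrix.det (Matrix.of fun i j : Fin (1+m) =>
        if (j:ℕ) = 0 then hyp0F1 (((t - (1+m) : ℕ):ℝ)+1) (lam1 * φ i)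
        else φ i ^ (m - (j:ℕ)) * ((t-(1+m)).factorial : ℝ) / ((t - ((j:ℕ)+1)).factorial : ℝ)) /
      (lam1 ^ m * ∏ i ∈ range m, (Nat.factorial i : ℝ))
    = (-1)^(∑ i : Fin (1+m), (Ioi i).card) * (Dmat (t-(1+m)) m lam1 φ 0).det := by
  set d := t - (1+m) with hd
  set c := ∑ i : Fin (1+m), (Ioi i).card with hc
  set wgt : Fin (1+m) → ℝ :=
    fun j => if (j:ℕ) = 0 then 1 else ((m - (j:ℕ)).factorial : ℝ) with hwgt
  -- matrix factorization
  have hM : (Matrix.of fun i j : Fin (1+m) =>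
        if (j:ℕ) = 0 then hyp0F1 ((d:ℝ)+1) (lam1 * φ i)
        else φ i ^ (m - (j:ℕ)) * (d.factorial : ℝ) / ((t - ((j:ℕ)+1)).factorial : ℝ))
      = ((Dmat d m lam1 φ 0 * Emat m lam1).submatrix id (⇑(Fin.revPerm))) *
          Matrix.diagonal wgt := by
    ext i j
    rw [Matrix.mul_diagonal, Matrix.submatrix_apply, Matrix.of_apply]
    by_cases hj : (j:ℕ) = 0
    · rw [if_pos hj]
      have hwj : wgt j = 1 := if_pos hj
      have hrev : (Fin.revPerm j : Fin (1+m)) = ⟨m, by omega⟩ := by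
        apply Fin.ext
        simp only [Fin.revPerm_apply, Fin.val_rev, hj]
        omega
      rw [hwj, mul_one, id, hrev, Dprime_apply_last]
    · rw [if_neg hj]
      have hj1 : 1 ≤ (j:ℕ) := by omega
      have hjm : (j:ℕ) ≤ m := by have := j.isLt; omega
      have hrev : ((Fin.revPerm j : Fin (1+m)) : ℕ) = m - (j:ℕ) := by
        simp only [Fin.revPerm_apply, Fin.val_rev]
        omega
      have hne : ((Fin.revPerm j : Fin (1+m)) : ℕ) ≠ m := by omega
      rw [id, Dprime_apply_ne d m lam1 φ i _ hne]
      have hDa : Dmat d m lam1 φ 0 i (Fin.revPerm j)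
          = coefA ((d:ℝ)+1) (φ i) (m - (j:ℕ)) := by
        have hlt : m - (j:ℕ) < m := by omega
        simp only [Dmat, Matrix.of_apply, hrev]
        exact Dfun_zero_of_lt d m (φ i) lam1 hlt
      rw [hDa]
      have hwj : wgt j = ((m - (j:ℕ)).factorial : ℝ) := if_neg hj
      rw [hwj, coefA, poch_eval]
      have htj : t - ((j:ℕ)+1) = d + (m - (j:ℕ)) := by omega
      rw [htj]
      have h1 : ((d.factorial : ℝ)) ≠ 0 := Nat.cast_ne_zero.2 (Nat.factorial_ne_zero _)
      have h2 : (((d + (m - (j:ℕ))).factorial : ℝ)) ≠ 0 :=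
        Nat.cast_ne_zero.2 (Nat.factorial_ne_zero _)
      have h3 : (((m - (j:ℕ)).factorial : ℝ)) ≠ 0 :=
        Nat.cast_ne_zero.2 (Nat.factorial_ne_zero _)
      field_simp
  -- the weight product
  have hprod : (∏ j : Fin (1+m), wgt j) = ∏ i ∈ range m, (Nat.factorial i : ℝ) := by
    have h1 : (∏ j : Fin (1+m), wgt j)
        = ∏ j ∈ range (1+m), (if j = 0 then (1:ℝ) else ((m - j).factorial : ℝ)) := by
      rw [← Fin.prod_univ_eq_prod_range (fun j => if j = 0 then (1:ℝ) else ((m - j).factorial : ℝ)) (1+m)]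
    rw [h1, show (1+m) = m+1 from Nat.add_comm 1 m, Finset.prod_range_succ']
    rw [if_pos rfl, mul_one]
    have h2 : ∀ x ∈ range m, (if x + 1 = 0 then (1:ℝ) else ((m - (x+1)).factorial : ℝ))
        = ((m - 1 - x).factorial : ℝ) := by
      intro x _
      rw [if_neg (Nat.succ_ne_zero x)]
      congr 2
      omega
    rw [Finset.prod_congr rfl h2]
    exact Finset.prod_range_reflect (fun x => ((x.factorial : ℝ))) m
  -- determinant of the factorization
  have hdetM : Matrix.det (Matrix.of fun i j : Fin (1+m) =>
        if (j:ℕ) = 0 then hyp0F1 ((d:ℝ)+1) (lam1 * φ i)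
        else φ i ^ (m - (j:ℕ)) * (d.factorial : ℝ) / ((t - ((j:ℕ)+1)).factorial : ℝ))
      = ((-1)^c * (Dmat d m lam1 φ 0).det) * (lam1 ^ m * ∏ i ∈ range m, (Nat.factorial i : ℝ)) := by
    rw [hM, Matrix.det_mul, Matrix.det_permute' Fin.revPerm _, Matrix.det_mul, det_Emat,
      Matrix.det_diagonal, hprod, sign_revPerm_eq (1+m), ← hc]
    ring
  rw [hdetM]
  have hne : (lam1 ^ m * ∏ i ∈ range m, (Nat.factorial i : ℝ)) ≠ 0 := by
    apply mul_ne_zero (pow_ne_zero _ hlam1)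
    apply Finset.prod_ne_zero_iff.2
    intro i _
    exact Nat.cast_ne_zero.2 (Nat.factorial_ne_zero _)
  exact mul_div_cancel_right₀ _ hne

end DRL

open DRL

/-- For fixed distinct `φ_1, ..., φ_s > 0` (with `s = 1 + m ≤ t`) and
`f_i(λ) = ₀F₁(t-s+1; λ φ_i)`, as `λ_2, ..., λ_s` tend to `0` (through values keeping all
of `(λ_1, λ_2, ..., λ_s)` distinct, with `λ_1 > 0` fixed), the ratio
`det[f_i(λ_j)] / ∏_{i<j}(λ_i - λ_j)` tends to `det M / (λ_1^{s-1} ∏_{i=1}^{s-1}(i-1)!)`,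
where `M` has first column `₀F₁(t-s+1; λ_1 φ_i)` and `j`-th column (`j ≥ 2`) equal to
`φ_i^{s-j} (t-s)!/(t-j)!`. -/
theorem det_ratio_limit_hyp0F1 (m t : ℕ) (ht : 1 + m ≤ t)
    (φ : Fin (1 + m) → ℝ) (hφpos : ∀ i, 0 < φ i) (hφinj : Function.Injective φ)
    (lam1 : ℝ) (hlam1 : 0 < lam1) :
    Filter.Tendsto
      (fun μ : Fin m → ℝ =>
        Matrix.det (Matrix.of fun i j : Fin (1 + m) =>
            hyp0F1 (((t - (1 + m) : ℕ) : ℝ) + 1)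
              (Fin.append (fun _ : Fin 1 => lam1) μ j * φ i)) /
          ∏ i : Fin (1 + m), ∏ j ∈ Finset.Ioi i,
            (Fin.append (fun _ : Fin 1 => lam1) μ i - Fin.append (fun _ : Fin 1 => lam1) μ j))
      (nhdsWithin 0
        {μ : Fin m → ℝ | Function.Injective (Fin.append (fun _ : Fin 1 => lam1) μ)})
      (nhds
        (Matrix.det (Matrix.of fun i j : Fin (1 + m) =>
            if j.val = 0 then hyp0F1 (((t - (1 + m) : ℕ) : ℝ) + 1) (lam1 * φ i)
            else φ i ^ (m - j.val) * (Nat.factorial (t - (1 + m)) : ℝ) /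
              (Nat.factorial (t - (j.val + 1)) : ℝ)) /
          (lam1 ^ m * ∏ i ∈ Finset.range m, (Nat.factorial i : ℝ)))) := by
  set d := t - (1 + m) with hd
  set c := ∑ i : Fin (1+m), (Ioi i).card with hc
  have hDdet : Tendsto (fun μ : Fin m → ℝ => (Dmat d m lam1 φ μ).det) (nhds 0)
      (nhds ((Dmat d m lam1 φ 0).det)) := by
    have hD : Tendsto (fun μ : Fin m → ℝ => Dmat d m lam1 φ μ) (nhds 0)
        (nhds (Dmat d m lam1 φ 0)) := by
      apply tendsto_pi_nhds.2
      intro i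
      apply tendsto_pi_nhds.2
      intro k
      exact tendsto_Dfun d m (φ i) lam1 k.val
    exact ((Continuous.matrix_det continuous_id).tendsto _).comp hD
  have hlim : Tendsto (fun μ : Fin m → ℝ => (-1:ℝ)^c * (Dmat d m lam1 φ μ).det)
      (nhdsWithin 0 {μ : Fin m → ℝ | Function.Injective (Fin.append (fun _ : Fin 1 => lam1) μ)})
      (nhds ((-1:ℝ)^c * (Dmat d m lam1 φ 0).det)) :=
    (tendsto_const_nhds.mul hDdet).mono_left nhdsWithin_le_nhds
  have hval := step_C m t ht lam1 (ne_of_gt hlam1) φ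
  rw [← hd, ← hc] at hval
  rw [hval]
  apply Tendsto.congr' _ hlim
  filter_upwards [self_mem_nhdsWithin] with μ hμ
  exact (step_A m d lam1 φ μ hμ).symm
end
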